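/- arXiv:1402.3277 — 5 statements merged into one kernel-verified Lean document; each statement's English description precedes it below -/
import Mathlib

section
/- Let α: A⁺ → S be a semigroup morphism into a finite semigroup S, let 𝐊 be a finite partition of A⁺, and let L₁ = α⁻¹(T₁) and L₂ = α⁻¹(T₂) be languages recognized by α with accepting sets T₁, T₂ ⊆ S. Then the following are equivalent: (1) for all t₁ ∈ T₁ and t₂ ∈ T₂, {t₁, t₂} ∉ I[α](𝐊); (2) L₁ and L₂ can be separated by a union of blocks of 𝐊 (i.e., there is a subfamily of 𝐊 whose union K satisfies L₁ ⊆ K and K ∩ L₂ = ∅). -/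
open Pointwise

namespace FOSep

/-- First-order formulas over alphabet `A`, with variables indexed by `ℕ`:
atomic formulas are `a(x)` for letters `a` and `x < y`; connectives are
negation, conjunction and existential quantification. -/
inductive Form (A : Type) : Type
  | letter : A → ℕ → Form A
  | lt : ℕ → ℕ → Form A
  | not : Form A → Form A
  | and : Form A → Form A → Form A
  | ex : ℕ → Form A → Form A

namespace Form

/-- Quantifier rank: maximal nesting depth of quantifiers. -/
def rank {A : Type} : Form A → ℕ
  | letter _ _ => 0
  | lt _ _ => 0
  | not φ => rank φ
  | and φ ψ => max (rank φ) (rank ψ)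
  | ex _ φ => rank φ + 1

/-- Free variables of a formula. -/
def freeVars {A : Type} : Form A → Finset ℕ
  | letter _ i => {i}
  | lt i j => {i, j}
  | not φ => freeVars φ
  | and φ ψ => freeVars φ ∪ freeVars ψ
  | ex n φ => freeVars φ \ {n}

end Form

/-- A sentence is a formula without free variables. -/
def IsSentence {A : Type} (φ : Form A) : Prop := φ.freeVars = ∅

/-- Satisfaction of a formula in a finite word (a list of letters, whose
positions are ordered by `<`), under an assignment of variables to positions. -/
def Interp {A : Type} (w : List A) : Form A → (ℕ → Fin w.length) → Prop
  | .letter a i, v => w.get (v i) = a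
  | .lt i j, v => (v i : ℕ) < (v j : ℕ)
  | .not φ, v => ¬ Interp w φ v
  | .and φ ψ, v => Interp w φ v ∧ Interp w ψ v
  | .ex n φ, v => ∃ p : Fin w.length, Interp w φ (Function.update v n p)

/-- The underlying (nonempty) list of letters of a nonempty word. -/
def wordList {A : Type} (w : FreeSemigroup A) : List A := w.head :: w.tail

/-- A nonempty word satisfies a formula if every assignment satisfies it;
for sentences this is the usual notion of satisfaction. -/
def Models {A : Type} (w : FreeSemigroup A) (φ : Form A) : Prop :=
  ∀ v : ℕ → Fin (wordList w).length, Interp (wordList w) φ v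

/-- The language of words of `A⁺` satisfying `φ`. -/
def LangOf {A : Type} (φ : Form A) : Set (FreeSemigroup A) := { w | Models w φ }

/-- A language `L ⊆ A⁺` is FO-definable if it is the language of some sentence. -/
def FODefinable {A : Type} (L : Set (FreeSemigroup A)) : Prop :=
  ∃ φ : Form A, IsSentence φ ∧ L = LangOf φ

/-- `w ≡_k w'`: the two words satisfy the same sentences of quantifier
rank at most `k`. -/
def EquivK {A : Type} (k : ℕ) (w w' : FreeSemigroup A) : Prop :=
  ∀ φ : Form A, IsSentence φ → φ.rank ≤ k → (Models w φ ↔ Models w' φ)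

/-- A finite partition of `X`: finitely many blocks, and every element lies
in exactly one block. -/
def FinPart {X : Type} (P : Set (Set X)) : Prop :=
  P.Finite ∧ ∀ x : X, ∃! B, B ∈ P ∧ x ∈ B

/-- An FO-partition: a finite partition all of whose blocks are FO-definable. -/
def FOPart {A : Type} (P : Set (Set (FreeSemigroup A))) : Prop :=
  FinPart P ∧ ∀ B ∈ P, FODefinable B

/-- `K` separates `L₀` from `L₁`. -/
def Separates {X : Type} (K L₀ L₁ : Set X) : Prop :=
  L₀ ⊆ K ∧ K ∩ L₁ = ∅

/-- `L₀` and `L₁` are separable by an FO-definable language. -/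
def FOSeparable {A : Type} (L₀ L₁ : Set (FreeSemigroup A)) : Prop :=
  ∃ K : Set (FreeSemigroup A), FODefinable K ∧ Separates K L₀ L₁

/-- The imprint of a finite partition `P` on a morphism `α`:
the sets `T ⊆ S` contained in the image of some block. -/
def imprint {A S : Type} [Semigroup S] (α : FreeSemigroup A →ₙ* S)
    (P : Set (Set (FreeSemigroup A))) : Set (Set S) :=
  { T | ∃ K ∈ P, T ⊆ ⇑α '' K }

/-- The optimal FO-imprint of `α`: the intersection of the imprints of all
FO-partitions. -/
def optImprintFO {A S : Type} [Semigroup S] (α : FreeSemigroup A →ₙ* S) :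
    Set (Set S) :=
  { T | ∀ P : Set (Set (FreeSemigroup A)), FOPart P → T ∈ imprint α P }

/-- Powers in a semigroup: `spow x n = x^(n+1)`. -/
def spow {M : Type} [Semigroup M] (x : M) : ℕ → M
  | 0 => x
  | n + 1 => spow x n * x

/-- `X ⊆ 2^S` contains `𝕊` and is closed under downset, products, and the
FO-operation `T ↦ T^ω ∪ T^(ω+1)` (phrased via idempotent powers: in a finite
semigroup, `T^ω` is the unique idempotent power of `T`). -/
def SatClosed {S : Type} [Semigroup S] (𝕊 X : Set (Set S)) : Prop :=
  𝕊 ⊆ X ∧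
  (∀ T ∈ X, ∀ T' : Set S, T' ⊆ T → T' ∈ X) ∧
  (∀ T ∈ X, ∀ T' ∈ X, T * T' ∈ X) ∧
  (∀ T ∈ X, ∀ n : ℕ, spow T n * spow T n = spow T n →
      spow T n ∪ spow T n * T ∈ X)

/-- `Sat 𝕊`: the smallest subset of `2^S` containing `𝕊` that is closed under
downset, products and the FO-operation. -/
def Sat {S : Type} [Semigroup S] (𝕊 : Set (Set S)) : Set (Set S) :=
  ⋂₀ { X | SatClosed 𝕊 X }

/-- `Sat α = Sat({{α(w)} | w ∈ A⁺})`. -/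
def SatM {A S : Type} [Semigroup S] (α : FreeSemigroup A →ₙ* S) : Set (Set S) :=
  Sat { T | ∃ w : FreeSemigroup A, T = {α w} }

/-- Left quotient `w⁻¹L`. -/
def QuotL {A : Type} (w : FreeSemigroup A) (L : Set (FreeSemigroup A)) :
    Set (FreeSemigroup A) := { u | w * u ∈ L }

/-- Right quotient `Lw⁻¹`. -/
def QuotR {A : Type} (w : FreeSemigroup A) (L : Set (FreeSemigroup A)) :
    Set (FreeSemigroup A) := { u | u * w ∈ L }

/-- A language is regular if it is recognized by a morphism into a finite
semigroup. -/
def Regular {A : Type} (L : Set (FreeSemigroup A)) : Prop :=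
  ∃ (S : Type) (_ : Semigroup S) (_ : Fintype S)
    (β : FreeSemigroup A →ₙ* S) (F : Set S), L = ⇑β ⁻¹' F

/-- A class of languages that is nonempty, closed under Boolean operations and
under left/right quotients by words, and contains only regular languages. -/
def GoodClass {A : Type} (C : Set (Set (FreeSemigroup A))) : Prop :=
  C.Nonempty ∧
  (∀ L ∈ C, ∀ L' ∈ C, L ∪ L' ∈ C) ∧
  (∀ L ∈ C, ∀ L' ∈ C, L ∩ L' ∈ C) ∧
  (∀ L ∈ C, Lᶜ ∈ C) ∧
  (∀ L ∈ C, ∀ w : FreeSemigroup A, QuotL w L ∈ C ∧ QuotR w L ∈ C) ∧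
  (∀ L ∈ C, Regular L)

/-- A C-partition: a finite partition all of whose blocks belong to `C`. -/
def CPart {A : Type} (C : Set (Set (FreeSemigroup A)))
    (P : Set (Set (FreeSemigroup A))) : Prop :=
  FinPart P ∧ ∀ B ∈ P, B ∈ C

/-- The optimal imprint with respect to a class `C`: the intersection of the
imprints of all C-partitions. -/
def optImprint {A S : Type} [Semigroup S] (C : Set (Set (FreeSemigroup A)))
    (α : FreeSemigroup A →ₙ* S) : Set (Set S) :=
  { T | ∀ P : Set (Set (FreeSemigroup A)), CPart C P → T ∈ imprint α P }

/-- A subset of a semigroup that is a subsemigroup and a group under the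
induced product. -/
def IsGroupSet {M : Type} [Semigroup M] (G : Set M) : Prop :=
  (∀ x ∈ G, ∀ y ∈ G, x * y ∈ G) ∧
  ∃ e ∈ G, (∀ x ∈ G, e * x = x ∧ x * e = x) ∧
    ∀ x ∈ G, ∃ y ∈ G, x * y = e ∧ y * x = e

/-- Aperiodicity: `s^ω = s^(ω+1)` for every `s` (phrased via idempotent powers). -/
def Aperiodic (S : Type) [Semigroup S] : Prop :=
  ∀ s : S, ∀ n : ℕ, spow s n * spow s n = spow s n → spow s n = spow s n * s

/-- Green's `H`-equivalence relative to a subsemigroup `X` of `M`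
(with witnesses taken in `X`). -/
def HEquivIn {M : Type} [Semigroup M] (X : Set M) (s s' : M) : Prop :=
  s = s' ∨ ((∃ t ∈ X, s * t = s') ∧ (∃ t ∈ X, s' * t = s) ∧
            (∃ t ∈ X, t * s = s') ∧ (∃ t ∈ X, t * s' = s))

/-- `H` is an `H`-class of the semigroup `X`. -/
def IsHClassIn {M : Type} [Semigroup M] (X : Set M) (H : Set M) : Prop :=
  ∃ s ∈ X, H = { s' ∈ X | HEquivIn X s s' }

/-- Closure conditions for `Sat_G`. -/
def SatGClosed {S : Type} [Semigroup S] (𝕊 X : Set (Set S)) : Prop :=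
  𝕊 ⊆ X ∧
  (∀ T ∈ X, ∀ T' : Set S, T' ⊆ T → T' ∈ X) ∧
  (∀ T ∈ X, ∀ T' ∈ X, T * T' ∈ X) ∧
  (∀ 𝔾 : Set (Set S), 𝔾 ⊆ X → IsGroupSet 𝔾 → ⋃₀ 𝔾 ∈ X)

/-- `Sat_G 𝕊`: the smallest subset of `2^S` containing `𝕊` closed under downset,
products, and unions of groups. -/
def SatG {S : Type} [Semigroup S] (𝕊 : Set (Set S)) : Set (Set S) :=
  ⋂₀ { X | SatGClosed 𝕊 X }

/-- Closure conditions for `Sat_H`. -/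
def SatHClosed {S : Type} [Semigroup S] (𝕊 X : Set (Set S)) : Prop :=
  𝕊 ⊆ X ∧
  (∀ T ∈ X, ∀ T' : Set S, T' ⊆ T → T' ∈ X) ∧
  (∀ T ∈ X, ∀ T' ∈ X, T * T' ∈ X) ∧
  (∀ H : Set (Set S), IsHClassIn X H → ⋃₀ H ∈ X)

/-- `Sat_H 𝕊`: the smallest subset of `2^S` containing `𝕊` closed under downset,
products, and unions of `H`-classes. -/
def SatH {S : Type} [Semigroup S] (𝕊 : Set (Set S)) : Set (Set S) :=
  ⋂₀ { X | SatHClosed 𝕊 X }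

/-! ### Infinite words -/

/-- Satisfaction of a formula in an ω-word (a function `ℕ → A`), under an
assignment of variables to positions. -/
def InterpInf {A : Type} (w : ℕ → A) : Form A → (ℕ → ℕ) → Prop
  | .letter a i, v => w (v i) = a
  | .lt i j, v => v i < v j
  | .not φ, v => ¬ InterpInf w φ v
  | .and φ ψ, v => InterpInf w φ v ∧ InterpInf w ψ v
  | .ex n φ, v => ∃ p : ℕ, InterpInf w φ (Function.update v n p)

/-- An ω-word satisfies a formula if every assignment satisfies it; for
sentences this is the usual notion of satisfaction. -/
def ModelsInf {A : Type} (w : ℕ → A) (φ : Form A) : Prop :=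
  ∀ v : ℕ → ℕ, InterpInf w φ v

/-- The ω-language of ω-words satisfying `φ`. -/
def LangOfInf {A : Type} (φ : Form A) : Set (ℕ → A) := { w | ModelsInf w φ }

/-- An ω-language is FO-definable if it is the ω-language of some sentence. -/
def FODefinableInf {A : Type} (L : Set (ℕ → A)) : Prop :=
  ∃ φ : Form A, IsSentence φ ∧ L = LangOfInf φ

/-- `w ≡_k w'` for ω-words. -/
def EquivKInf {A : Type} (k : ℕ) (w w' : ℕ → A) : Prop :=
  ∀ φ : Form A, IsSentence φ → φ.rank ≤ k → (ModelsInf w φ ↔ ModelsInf w' φ)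

/-- An FO-partition of `A^∞`. -/
def FOPartInf {A : Type} (P : Set (Set (ℕ → A))) : Prop :=
  FinPart P ∧ ∀ B ∈ P, FODefinableInf B

/-- The imprint of a finite partition of `A^∞` on a map `α : A^∞ → Sinf`. -/
def imprintInf {A Sinf : Type} (α : (ℕ → A) → Sinf) (P : Set (Set (ℕ → A))) :
    Set (Set Sinf) :=
  { T | ∃ K ∈ P, T ⊆ α '' K }

/-- A C-partition of `A^∞`. -/
def CPartInf {A : Type} (C : Set (Set (ℕ → A))) (P : Set (Set (ℕ → A))) : Prop :=
  FinPart P ∧ ∀ B ∈ P, B ∈ C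

/-- The optimal imprint on `α : A^∞ → Sinf` with respect to a class `C` of
ω-languages. -/
def optImprintInf {A Sinf : Type} (C : Set (Set (ℕ → A))) (α : (ℕ → A) → Sinf) :
    Set (Set Sinf) :=
  { T | ∀ P : Set (Set (ℕ → A)), CPartInf C P → T ∈ imprintInf α P }

/-- The optimal FO-imprint on `α : A^∞ → Sinf`. -/
def optImprintFOInf {A Sinf : Type} (α : (ℕ → A) → Sinf) : Set (Set Sinf) :=
  { T | ∀ P : Set (Set (ℕ → A)), FOPartInf P → T ∈ imprintInf α P }

/-- Concatenation of a finite word and an ω-word. -/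
def catInf {A : Type} (u : FreeSemigroup A) (x : ℕ → A) : ℕ → A :=
  fun n =>
    if h : n < (wordList u).length then (wordList u).get ⟨n, h⟩
    else x (n - (wordList u).length)


theorem stmt2 {A S : Type} [Fintype A] [Semigroup S] [Fintype S]
    (α : FreeSemigroup A →ₙ* S) (P : Set (Set (FreeSemigroup A)))
    (hP : FinPart P) (T₁ T₂ : Set S) :
    (∀ t₁ ∈ T₁, ∀ t₂ ∈ T₂, ({t₁, t₂} : Set S) ∉ imprint α P) ↔
      ∃ Q ⊆ P, Separates (⋃₀ Q) (⇑α ⁻¹' T₁) (⇑α ⁻¹' T₂) := by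
  constructor
  · intro h
    refine ⟨{K ∈ P | ∃ u ∈ K, α u ∈ T₁}, fun K hK => hK.1, ?_, ?_⟩
    · intro w hw
      obtain ⟨B, ⟨hBP, hwB⟩, -⟩ := hP.2 w
      exact ⟨B, ⟨hBP, w, hwB, hw⟩, hwB⟩
    · ext w
      simp only [Set.mem_inter_iff, Set.mem_sUnion, Set.mem_empty_iff_false, iff_false]
      rintro ⟨⟨K, ⟨hKP, u, huK, huT⟩, hwK⟩, hwT⟩
      exact h _ huT _ hwT ⟨K, hKP, by
        rintro t (rfl | rfl)
        · exact ⟨u, huK, rfl⟩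
        · exact ⟨w, hwK, rfl⟩⟩
  · rintro ⟨Q, hQP, hSub, hDisj⟩ t₁ ht₁ t₂ ht₂ ⟨K, hKP, hTK⟩
    obtain ⟨u, huK, hu⟩ := hTK (Set.mem_insert _ _)
    obtain ⟨w, hwK, hw⟩ := hTK (Set.mem_insert_of_mem _ rfl)
    obtain ⟨B, hBQ, huB⟩ := hSub (show u ∈ ⇑α ⁻¹' T₁ from show α u ∈ T₁ from hu ▸ ht₁)
    obtain ⟨B', -, huniq⟩ := hP.2 u
    have hBK : B = K := (huniq B ⟨hQP hBQ, huB⟩).trans (huniq K ⟨hKP, huK⟩).symm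
    have : w ∈ ⋃₀ Q ∩ ⇑α ⁻¹' T₂ := ⟨⟨B, hBQ, hBK ▸ hwK⟩, show α w ∈ T₂ from hw ▸ ht₂⟩
    rw [hDisj] at this
    exact this

end FOSep
end

section
/- Let C be a class of languages over a finite alphabet A that is nonempty and closed under Boolean operations, closed under left and right quotients by words, and contains only regular languages, and let α: A⁺ → S be a semigroup morphism into a finite semigroup S. Then there exists a C-partition 𝐊 of A⁺ that is optimal for α, i.e., such that I[α](𝐊) ⊆ I[α](𝐊') for every C-partition 𝐊' of A⁺. -/
open Pointwise

namespace FOSep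

theorem stmt3 {A S : Type} [Fintype A] [Semigroup S] [Fintype S]
    (C : Set (Set (FreeSemigroup A))) (hC : GoodClass C)
    (α : FreeSemigroup A →ₙ* S) :
    ∃ P : Set (Set (FreeSemigroup A)), CPart C P ∧
      ∀ P' : Set (Set (FreeSemigroup A)), CPart C P' →
        imprint α P ⊆ imprint α P' := by
  obtain ⟨⟨L, hL⟩, hUnion, hInter, hCompl, -, -⟩ := hC
  have huniv : (Set.univ : Set (FreeSemigroup A)) ∈ C := by
    have := hUnion L hL Lᶜ (hCompl L hL)
    simpa using this
  -- the trivial C-partition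
  have hP0 : CPart C ({Set.univ} : Set (Set (FreeSemigroup A))) := by
    refine ⟨⟨Set.finite_singleton _, fun x => ⟨Set.univ, ⟨rfl, trivial⟩, ?_⟩⟩, ?_⟩
    · rintro B ⟨hB, -⟩; exact hB
    · rintro B hB; rw [Set.mem_singleton_iff] at hB; rw [hB]; exact huniv
  -- common refinements of C-partitions are C-partitions with smaller imprint
  have href : ∀ P1 P2 : Set (Set (FreeSemigroup A)), CPart C P1 → CPart C P2 →
      CPart C ((fun p : Set (FreeSemigroup A) × Set (FreeSemigroup A) => p.1 ∩ p.2) ''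
        (P1 ×ˢ P2)) := by
    intro P1 P2 h1 h2
    refine ⟨⟨(h1.1.1.prod h2.1.1).image _, fun x => ?_⟩, ?_⟩
    · obtain ⟨B1, ⟨hB1, hx1⟩, hu1⟩ := h1.1.2 x
      obtain ⟨B2, ⟨hB2, hx2⟩, hu2⟩ := h2.1.2 x
      refine ⟨B1 ∩ B2, ⟨⟨(B1, B2), ⟨hB1, hB2⟩, rfl⟩, hx1, hx2⟩, ?_⟩
      rintro B ⟨⟨⟨C1, C2⟩, ⟨hC1, hC2⟩, rfl⟩, hxB⟩
      have e1 := hu1 C1 ⟨hC1, hxB.1⟩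
      have e2 := hu2 C2 ⟨hC2, hxB.2⟩
      simp only [e1, e2]
    · rintro B ⟨⟨C1, C2⟩, ⟨hC1, hC2⟩, rfl⟩
      exact hInter C1 (h1.2 C1 hC1) C2 (h2.2 C2 hC2)
  have himp : ∀ (P1 P2 : Set (Set (FreeSemigroup A))),
      imprint α ((fun p : Set (FreeSemigroup A) × Set (FreeSemigroup A) => p.1 ∩ p.2) ''
        (P1 ×ˢ P2)) ⊆ imprint α P1 ∩ imprint α P2 := by
    rintro P1 P2 T ⟨K, ⟨⟨B1, B2⟩, ⟨hB1, hB2⟩, rfl⟩, hT⟩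
    exact ⟨⟨B1, hB1, hT.trans (Set.image_mono Set.inter_subset_left)⟩,
      ⟨B2, hB2, hT.trans (Set.image_mono Set.inter_subset_right)⟩⟩
  -- the set of achievable imprints is finite and nonempty
  set I : Set (Set (Set S)) := {J | ∃ P, CPart C P ∧ imprint α P = J} with hI
  have hIfin : I.Finite := Set.Finite.subset Set.finite_univ (Set.subset_univ _)
  have hne : I.Nonempty := ⟨imprint α {Set.univ}, {Set.univ}, hP0, rfl⟩
  obtain ⟨J, hJI, hmin⟩ : ∃ a ∈ I, ∀ a' ∈ I, id a' ≤ id a → id a = id a' := by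
    obtain ⟨a, ha, h⟩ := Set.Finite.exists_minimalFor id I hIfin hne
    exact ⟨a, ha, fun a' ha' hle => le_antisymm (h ha' hle) hle⟩
  obtain ⟨P, hP, rfl⟩ := hJI
  refine ⟨P, hP, ?_⟩
  intro P' hP'
  set Q := (fun p : Set (FreeSemigroup A) × Set (FreeSemigroup A) => p.1 ∩ p.2) ''
    (P ×ˢ P') with hQdef
  have hQ : CPart C Q := href P P' hP hP'
  have hsub := himp P P'
  have heq : imprint α P = imprint α Q :=
    hmin (imprint α Q) ⟨Q, hQ, rfl⟩ (fun T hT => (hsub hT).1)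
  rw [heq]
  exact fun T hT => (hsub hT).2

end FOSep
end

section
/- Let C be a class of languages over a finite alphabet A that is nonempty and closed under Boolean operations, closed under left and right quotients by words, and contains only regular languages, and let α: A⁺ → S be a semigroup morphism into a finite semigroup S. Then the optimal imprint I_C[α] is a subsemigroup of 2^S: for all R, T ∈ I_C[α], the product R·T = {rt | r ∈ R, t ∈ T} belongs to I_C[α]. -/
open Pointwise

namespace FOSep

/-- Refinement lemma: every C-partition admits a C-partition refinement whose
blocks are nonempty and whose elements have the same right-extension profile. -/
lemma refine_part {A : Type} (C : Set (Set (FreeSemigroup A))) (hC : GoodClass C)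
    (P : Set (Set (FreeSemigroup A))) (hP : CPart C P) :
    ∃ Q : Set (Set (FreeSemigroup A)), CPart C Q ∧ (∀ B ∈ Q, B.Nonempty) ∧
      ∀ B ∈ Q, ∀ u ∈ B, ∀ u' ∈ B, ∀ K ∈ P, ∀ w, u * w ∈ K ↔ u' * w ∈ K := by
  classical
  haveI hFinP : Finite ↥P := hP.1.1.to_subtype
  haveI iP : Fintype ↥P := hP.1.1.fintype
  have hReg : ∀ K : ↥P, ∃ (SK : Type) (_ : Semigroup SK) (_ : Fintype SK)
      (β : FreeSemigroup A →ₙ* SK) (F : Set SK), K.val = ⇑β ⁻¹' F :=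
    fun K => hC.2.2.2.2.2 K.val (hP.2 K.val K.2)
  choose SK iS iF β F hKF using hReg
  have hdep : ∀ (K : ↥P) (u w w' : FreeSemigroup A), β K w = β K w' →
      (u * w ∈ K.val ↔ u * w' ∈ K.val) := by
    intro K u w w' h
    letI := iS K
    conv_lhs => rw [hKF K]
    conv_rhs => rw [hKF K]
    simp only [Set.mem_preimage]
    rw [MulHom.map_mul, MulHom.map_mul, h]
  -- universal set in C
  have hUniv : (Set.univ : Set (FreeSemigroup A)) ∈ C := by
    obtain ⟨L, hL⟩ := hC.1
    have := hC.2.1 L hL Lᶜ (hC.2.2.2.1 L hL)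
    rwa [Set.union_compl_self] at this
  -- C is closed under finite intersections
  have hInterF : ∀ {ι : Type} (t : Finset ι) (g : ι → Set (FreeSemigroup A)),
      (∀ i, g i ∈ C) → (⋂ i ∈ t, g i) ∈ C := by
    intro ι t g hg
    induction t using Finset.induction_on with
    | empty => simpa using hUniv
    | insert h _ _ ih =>
        rw [Finset.set_biInter_insert]
        exact hC.2.2.1 _ (hg _) _ ih
  have hInterPi : ∀ {ι : Type} [Fintype ι] (g : ι → Set (FreeSemigroup A)),
      (∀ i, g i ∈ C) → (⋂ i, g i) ∈ C := by
    intro ι _ g hg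
    have : (⋂ i, g i) = ⋂ i ∈ (Finset.univ : Finset ι), g i := by simp
    rw [this]; exact hInterF _ g hg
  -- the refined blocks
  set Block : FreeSemigroup A → Set (FreeSemigroup A) :=
    fun u => {u' | ∀ K : ↥P, ∀ w, u * w ∈ K.val ↔ u' * w ∈ K.val} with hBlock
  have hself : ∀ u, u ∈ Block u := fun u K w => Iff.rfl
  set Q := Set.range Block with hQ
  -- finiteness of Q
  have hQfin : Q.Finite := by
    haveI : ∀ K : ↥P, Finite (Set (SK K)) := fun K => by
      haveI := iF K; infer_instance
    set f : FreeSemigroup A → ∀ K : ↥P, Set (SK K) :=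
      fun u K => {s | ∃ w, β K w = s ∧ u * w ∈ K.val} with hf
    have hfu : ∀ (u : FreeSemigroup A) (K : ↥P) (w : FreeSemigroup A),
        β K w ∈ f u K ↔ u * w ∈ K.val := by
      intro u K w
      constructor
      · rintro ⟨w', hw', hm⟩
        exact (hdep K u w' w hw').mp hm
      · intro hm
        exact ⟨w, rfl, hm⟩
    have hBf : ∀ u, Block u
        = {u' | ∀ (K : ↥P) (w), β K w ∈ f u K ↔ u' * w ∈ K.val} := by
      intro u
      ext u'
      simp only [hBlock, Set.mem_setOf_eq]
      refine forall_congr' fun K => forall_congr' fun w => ?_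
      exact iff_congr (hfu u K w).symm Iff.rfl
    have hsub : Q ⊆ (fun d : ∀ K : ↥P, Set (SK K) =>
        {u' | ∀ (K : ↥P) (w), β K w ∈ d K ↔ u' * w ∈ K.val}) '' Set.range f := by
      rintro B ⟨u, rfl⟩
      exact ⟨f u, ⟨u, rfl⟩, (hBf u).symm⟩
    have hrf : (Set.range f).Finite := Set.toFinite _
    exact Set.Finite.subset (hrf.image _) hsub
  -- blocks are equal when they intersect
  have hblockeq : ∀ u x, x ∈ Block u → Block u = Block x := by
    intro u x hx
    ext u'
    simp only [hBlock, Set.mem_setOf_eq] at hx ⊢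
    constructor
    · intro h K w; exact (hx K w).symm.trans (h K w)
    · intro h K w; exact (hx K w).trans (h K w)
  -- each block lies in C
  have hblockC : ∀ u, Block u ∈ C := by
    intro u
    set Y : ∀ K : ↥P, SK K → Set (FreeSemigroup A) := fun K s =>
      if h : ∃ w, β K w = s then
        (if u * h.choose ∈ K.val then QuotR h.choose K.val
         else (QuotR h.choose K.val)ᶜ)
      else Set.univ with hYdef
    have hYC : ∀ K s, Y K s ∈ C := by
      intro K s
      simp only [hYdef]
      split
      · split
        · exact ((hC.2.2.2.2.1 K.val (hP.2 K.val K.2) _).2)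
        · exact hC.2.2.2.1 _ ((hC.2.2.2.2.1 K.val (hP.2 K.val K.2) _).2)
      · exact hUniv
    have hBeq : Block u = ⋂ K : ↥P, ⋂ s : SK K, Y K s := by
      ext u'
      simp only [hBlock, Set.mem_setOf_eq, Set.mem_iInter]
      constructor
      · intro hu' K s
        simp only [hYdef]
        split
        · rename_i hex
          split
          · rename_i hc
            exact (hu' K hex.choose).mp hc
          · rename_i hc
            exact fun hc' => hc ((hu' K hex.choose).mpr hc')
        · exact Set.mem_univ u'
      · intro hY' K w
        have hs : ∃ w', β K w' = β K w := ⟨w, rfl⟩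
        have hKs := hY' K (β K w)
        rw [hYdef] at hKs
        simp only at hKs
        rw [dif_pos hs] at hKs
        have hw₀ : β K hs.choose = β K w := hs.choose_spec
        have e1 : u * hs.choose ∈ K.val ↔ u * w ∈ K.val :=
          hdep K u hs.choose w hw₀
        have e2 : u' * hs.choose ∈ K.val ↔ u' * w ∈ K.val :=
          hdep K u' hs.choose w hw₀
        by_cases hc : u * hs.choose ∈ K.val
        · rw [if_pos hc] at hKs
          exact iff_of_true (e1.mp hc) (e2.mp hKs)
        · rw [if_neg hc] at hKs
          exact iff_of_false (fun h => hc (e1.mpr h)) (fun h => hKs (e2.mpr h))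
    rw [hBeq]
    exact hInterPi _ fun K => hInterPi _ fun s => hYC K s
  refine ⟨Q, ⟨⟨hQfin, ?_⟩, ?_⟩, ?_, ?_⟩
  · intro x
    refine ⟨Block x, ⟨⟨x, rfl⟩, hself x⟩, ?_⟩
    rintro B ⟨⟨u, rfl⟩, hx⟩
    exact hblockeq u x hx
  · rintro B ⟨u, rfl⟩
    exact hblockC u
  · rintro B ⟨u, rfl⟩
    exact ⟨u, hself u⟩
  · rintro B ⟨u₀, rfl⟩ u hu u' hu' K hK w
    have h1 := hu ⟨K, hK⟩ w
    have h2 := hu' ⟨K, hK⟩ w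
    exact h1.symm.trans h2

theorem stmt4 {A S : Type} [Fintype A] [Semigroup S] [Fintype S]
    (C : Set (Set (FreeSemigroup A))) (hC : GoodClass C)
    (α : FreeSemigroup A →ₙ* S) :
    ∀ R ∈ optImprint C α, ∀ T ∈ optImprint C α, R * T ∈ optImprint C α := by
  intro R hR T hT P hP
  obtain ⟨Q, hQpart, hQne, hQsep⟩ := refine_part C hC P hP
  obtain ⟨B, hBQ, hRB⟩ := hR Q hQpart
  obtain ⟨u₀, hu₀⟩ := hQne B hBQ
  have hP'part : CPart C ((fun K => QuotL u₀ K) '' P) := by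
    refine ⟨⟨hP.1.1.image _, ?_⟩, ?_⟩
    · intro x
      obtain ⟨K, ⟨hKP, hxK⟩, huniq⟩ := hP.1.2 (u₀ * x)
      refine ⟨QuotL u₀ K, ⟨⟨K, hKP, rfl⟩, hxK⟩, ?_⟩
      rintro B' ⟨⟨K', hK'P, rfl⟩, hxB'⟩
      rw [huniq K' ⟨hK'P, hxB'⟩]
    · rintro B' ⟨K, hKP, rfl⟩
      exact (hC.2.2.2.2.1 K (hP.2 K hKP) u₀).1
  obtain ⟨B', ⟨K₀, hK₀P, rfl⟩, hTB'⟩ := hT _ hP'part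
  refine ⟨K₀, hK₀P, ?_⟩
  rintro s hs
  rw [Set.mem_mul] at hs
  obtain ⟨r, hr, t, ht, rfl⟩ := hs
  obtain ⟨ur, hurB, rfl⟩ := hRB hr
  obtain ⟨wt, hwt, rfl⟩ := hTB' ht
  have hmem : ur * wt ∈ K₀ :=
    (hQsep B hBQ u₀ hu₀ ur hurB K₀ hK₀P wt).mp hwt
  exact ⟨ur * wt, hmem, map_mul α ur wt⟩

end FOSep
end

section
/- Let C be a class of languages over a finite alphabet A that is nonempty and closed under Boolean operations, closed under left and right quotients by words, and contains only regular languages. Let α: A⁺ → S be a semigroup morphism into a finite semigroup S and let L₁ = α⁻¹(T₁), L₂ = α⁻¹(T₂) be languages recognized by α with accepting sets T₁, T₂ ⊆ S. Then the following are equivalent: (1) L₁ and L₂ are C-separable (some language of C contains L₁ and is disjoint from L₂); (2) for all t₁ ∈ T₁ and t₂ ∈ T₂, {t₁, t₂} ∉ I_C[α]; (3) for every C-partition 𝐊 that is optimal for α, L₁ and L₂ can be separated by a union of blocks of 𝐊. -/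
open Pointwise

namespace FOSep

/-! ### Auxiliary lemmas for stmt5 -/

section Stmt5Aux

variable {A S : Type} [Semigroup S]

lemma goodclass_univ_mem {C : Set (Set (FreeSemigroup A))} (hC : GoodClass C) :
    (Set.univ : Set (FreeSemigroup A)) ∈ C := by
  obtain ⟨⟨L, hL⟩, hun, -, hcomp, -, -⟩ := hC
  have h := hun L hL Lᶜ (hcomp L hL)
  rwa [Set.union_compl_self] at h

lemma goodclass_empty_mem {C : Set (Set (FreeSemigroup A))} (hC : GoodClass C) :
    (∅ : Set (FreeSemigroup A)) ∈ C := by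
  have h := hC.2.2.2.1 _ (goodclass_univ_mem hC)
  rwa [Set.compl_univ] at h

lemma goodclass_sUnion {C : Set (Set (FreeSemigroup A))} (hC : GoodClass C)
    {Q : Set (Set (FreeSemigroup A))} (hfin : Q.Finite) (hsub : Q ⊆ C) :
    ⋃₀ Q ∈ C := by
  revert hsub
  refine Set.Finite.induction_on _ hfin (fun _ => by simpa using goodclass_empty_mem hC) ?_
  intro B Q' hx hs ih hsub
  rw [Set.sUnion_insert]
  exact hC.2.1 _ (hsub (Set.mem_insert _ _)) _
    (ih (fun B' hB' => hsub (Set.mem_insert_of_mem _ hB')))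

lemma trivial_cpart {C : Set (Set (FreeSemigroup A))} (hC : GoodClass C) :
    CPart C {Set.univ} := by
  constructor
  · exact ⟨Set.finite_singleton _, fun x =>
      ⟨Set.univ, ⟨rfl, trivial⟩, fun B hB => hB.1⟩⟩
  · intro B hB
    rw [Set.mem_singleton_iff] at hB; subst hB
    exact goodclass_univ_mem hC

lemma cpart_refine {C : Set (Set (FreeSemigroup A))} (hC : GoodClass C)
    {P P' : Set (Set (FreeSemigroup A))} (hP : CPart C P) (hP' : CPart C P')
    (α : FreeSemigroup A →ₙ* S) :
    ∃ P'', CPart C P'' ∧ imprint α P'' ⊆ imprint α P ∧ imprint α P'' ⊆ imprint α P' := by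
  refine ⟨Set.image2 (· ∩ ·) P P', ⟨⟨hP.1.1.image2 _ hP'.1.1, ?_⟩, ?_⟩, ?_, ?_⟩
  · intro x
    obtain ⟨B, ⟨hBP, hxB⟩, hBu⟩ := hP.1.2 x
    obtain ⟨B', ⟨hB'P, hxB'⟩, hB'u⟩ := hP'.1.2 x
    refine ⟨B ∩ B', ⟨Set.mem_image2_of_mem hBP hB'P, hxB, hxB'⟩, ?_⟩
    rintro D ⟨hD, hxD⟩
    obtain ⟨E, hE, E', hE', rfl⟩ := Set.mem_image2.mp hD
    rw [hBu E ⟨hE, hxD.1⟩, hB'u E' ⟨hE', hxD.2⟩]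
  · intro D hD
    obtain ⟨E, hE, E', hE', rfl⟩ := Set.mem_image2.mp hD
    exact hC.2.2.1 E (hP.2 E hE) E' (hP'.2 E' hE')
  · rintro T ⟨K, hK, hTK⟩
    obtain ⟨E, hE, E', hE', rfl⟩ := Set.mem_image2.mp hK
    exact ⟨E, hE, hTK.trans (Set.image_mono Set.inter_subset_left)⟩
  · rintro T ⟨K, hK, hTK⟩
    obtain ⟨E, hE, E', hE', rfl⟩ := Set.mem_image2.mp hK
    exact ⟨E', hE', hTK.trans (Set.image_mono Set.inter_subset_right)⟩

lemma exists_optimal {C : Set (Set (FreeSemigroup A))} [Fintype S] (hC : GoodClass C)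
    (α : FreeSemigroup A →ₙ* S) :
    ∃ P, CPart C P ∧ ∀ P', CPart C P' → imprint α P ⊆ imprint α P' := by
  have key : ∀ s : Set (Set (Set S)), s.Finite →
      (∀ I ∈ s, ∃ P, CPart C P ∧ imprint α P = I) →
      ∃ P, CPart C P ∧ ∀ I ∈ s, imprint α P ⊆ I := by
    intro s hfin
    refine Set.Finite.induction_on _ hfin
      (fun _ => ⟨{Set.univ}, trivial_cpart hC, by simp⟩) ?_
    intro I₀ s' hx hs ih hach
    obtain ⟨P, hP, hPs⟩ := ih (fun I hI => hach I (Set.mem_insert_of_mem _ hI))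
    obtain ⟨PI, hPI, hPIim⟩ := hach I₀ (Set.mem_insert _ _)
    obtain ⟨P'', hP'', h1, h2⟩ := cpart_refine hC hP hPI α
    refine ⟨P'', hP'', fun I hI => ?_⟩
    rcases Set.mem_insert_iff.mp hI with h | h
    · subst h; exact hPIim ▸ h2
    · exact h1.trans (hPs I h)
  obtain ⟨P, hP, hopt⟩ := key (imprint α '' {P | CPart C P}) (Set.toFinite _)
    (by rintro I ⟨P, hP, rfl⟩; exact ⟨P, hP, rfl⟩)
  exact ⟨P, hP, fun P' hP' => hopt _ ⟨P', hP', rfl⟩⟩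

lemma sep_core {C : Set (Set (FreeSemigroup A))} (α : FreeSemigroup A →ₙ* S)
    (T₁ T₂ : Set S)
    (h2 : ∀ t₁ ∈ T₁, ∀ t₂ ∈ T₂, ({t₁, t₂} : Set S) ∉ optImprint C α)
    {P : Set (Set (FreeSemigroup A))} (hP : CPart C P)
    (hopt : ∀ P', CPart C P' → imprint α P ⊆ imprint α P') :
    Separates (⋃₀ {B ∈ P | (B ∩ ⇑α ⁻¹' T₁).Nonempty}) (⇑α ⁻¹' T₁) (⇑α ⁻¹' T₂) := by
  constructor
  · intro w hw
    obtain ⟨B, ⟨hBP, hwB⟩, -⟩ := hP.1.2 w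
    exact ⟨B, ⟨hBP, ⟨w, hwB, hw⟩⟩, hwB⟩
  · rw [Set.eq_empty_iff_forall_notMem]
    rintro w ⟨⟨B, ⟨hBP, w₁, hw₁B, hw₁T⟩, hwB⟩, hwT⟩
    refine h2 (α w₁) hw₁T (α w) hwT ?_
    intro P' hP'
    apply hopt P' hP'
    refine ⟨B, hBP, ?_⟩
    intro t ht
    rcases ht with rfl | ht
    · exact ⟨w₁, hw₁B, rfl⟩
    · rw [Set.mem_singleton_iff] at ht; subst ht
      exact ⟨w, hwB, rfl⟩

lemma pair_cpart {C : Set (Set (FreeSemigroup A))} (hC : GoodClass C)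
    {K : Set (FreeSemigroup A)} (hK : K ∈ C) : CPart C {K, Kᶜ} := by
  refine ⟨⟨(Set.finite_singleton Kᶜ).insert K, fun x => ?_⟩, ?_⟩
  · by_cases hx : x ∈ K
    · refine ⟨K, ⟨Set.mem_insert _ _, hx⟩, ?_⟩
      rintro B ⟨hB, hxB⟩
      rcases hB with rfl | hB
      · rfl
      · rw [Set.mem_singleton_iff] at hB; subst hB; exact absurd hx hxB
    · refine ⟨Kᶜ, ⟨Set.mem_insert_of_mem _ rfl, hx⟩, ?_⟩
      rintro B ⟨hB, hxB⟩
      rcases hB with rfl | hB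
      · exact absurd hxB hx
      · rw [Set.mem_singleton_iff] at hB; exact hB
  · intro B hB
    rcases hB with rfl | hB
    · exact hK
    · rw [Set.mem_singleton_iff] at hB; subst hB
      exact hC.2.2.2.1 _ hK

end Stmt5Aux

theorem stmt5 {A S : Type} [Fintype A] [Semigroup S] [Fintype S]
    (C : Set (Set (FreeSemigroup A))) (hC : GoodClass C)
    (α : FreeSemigroup A →ₙ* S) (T₁ T₂ : Set S) :
    ((∃ K ∈ C, Separates K (⇑α ⁻¹' T₁) (⇑α ⁻¹' T₂)) ↔
        ∀ t₁ ∈ T₁, ∀ t₂ ∈ T₂, ({t₁, t₂} : Set S) ∉ optImprint C α) ∧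
    ((∀ t₁ ∈ T₁, ∀ t₂ ∈ T₂, ({t₁, t₂} : Set S) ∉ optImprint C α) ↔
        ∀ P : Set (Set (FreeSemigroup A)), CPart C P →
          (∀ P' : Set (Set (FreeSemigroup A)), CPart C P' →
            imprint α P ⊆ imprint α P') →
          ∃ Q ⊆ P, Separates (⋃₀ Q) (⇑α ⁻¹' T₁) (⇑α ⁻¹' T₂)) := by
  obtain ⟨Popt, hPopt, hoptP⟩ := exists_optimal hC α
  have h12 : (∃ K ∈ C, Separates K (⇑α ⁻¹' T₁) (⇑α ⁻¹' T₂)) ↔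
      ∀ t₁ ∈ T₁, ∀ t₂ ∈ T₂, ({t₁, t₂} : Set S) ∉ optImprint C α := by
    constructor
    · rintro ⟨K, hKC, hKsub, hKdis⟩ t₁ ht₁ t₂ ht₂ hm
      obtain ⟨B, hB, hTB⟩ := hm _ (pair_cpart hC hKC)
      obtain ⟨w₁, hw₁, hα1⟩ := hTB (Set.mem_insert _ _)
      obtain ⟨w₂, hw₂, hα2⟩ := hTB (Set.mem_insert_of_mem _ rfl)
      rcases hB with rfl | hB
      · have hmem : w₂ ∈ B ∩ ⇑α ⁻¹' T₂ :=
          ⟨hw₂, by rw [Set.mem_preimage, hα2]; exact ht₂⟩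
        rw [hKdis] at hmem; exact hmem
      · rw [Set.mem_singleton_iff] at hB; subst hB
        exact hw₁ (hKsub (by rw [Set.mem_preimage, hα1]; exact ht₁))
    · intro h2
      refine ⟨⋃₀ {B ∈ Popt | (B ∩ ⇑α ⁻¹' T₁).Nonempty}, ?_,
        sep_core α T₁ T₂ h2 hPopt hoptP⟩
      exact goodclass_sUnion hC (hPopt.1.1.subset (Set.sep_subset _ _))
        (fun B hB => hPopt.2 B hB.1)
  refine ⟨h12, ?_⟩
  constructor
  · intro h2 P hP hopt
    exact ⟨{B ∈ P | (B ∩ ⇑α ⁻¹' T₁).Nonempty}, Set.sep_subset _ _,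
      sep_core α T₁ T₂ h2 hP hopt⟩
  · intro h3 t₁ ht₁ t₂ ht₂ hm
    obtain ⟨Q, hQP, hQsub, hQdis⟩ := h3 Popt hPopt hoptP
    obtain ⟨B, hBP, hTB⟩ := hm Popt hPopt
    obtain ⟨w₁, hw₁, hα1⟩ := hTB (Set.mem_insert _ _)
    obtain ⟨w₂, hw₂, hα2⟩ := hTB (Set.mem_insert_of_mem _ rfl)
    have hw₁L : w₁ ∈ ⇑α ⁻¹' T₁ := by rw [Set.mem_preimage, hα1]; exact ht₁
    obtain ⟨B', hB'Q, hw₁B'⟩ := hQsub hw₁L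
    obtain ⟨B₀, hB₀, huniq⟩ := hPopt.1.2 w₁
    have hBB' : B' = B := (huniq B' ⟨hQP hB'Q, hw₁B'⟩).trans (huniq B ⟨hBP, hw₁⟩).symm
    have hmem : w₂ ∈ ⋃₀ Q ∩ ⇑α ⁻¹' T₂ :=
      ⟨⟨B', hB'Q, hBB' ▸ hw₂⟩, by rw [Set.mem_preimage, hα2]; exact ht₂⟩
    rw [hQdis] at hmem; exact hmem


end FOSep
end

section
/- (Schützenberger's Theorem) Let A be a finite alphabet and let L ⊆ A⁺ be a regular language. Then L is FO-definable if and only if L is recognized by a semigroup morphism α: A⁺ → S into a finite aperiodic semigroup S, i.e., a finite semigroup in which every element s satisfies s^ω = s^{ω+1}. -/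
open Pointwise

namespace FOSep

/-! ### Part 1a: basic FO semantics lemmas -/

section Part1
variable {A : Type}

theorem wordList_ne_nil (w : FreeSemigroup A) : wordList w ≠ [] := by
  simp [wordList]

theorem wordList_length_pos (w : FreeSemigroup A) : 0 < (wordList w).length := by
  simp [wordList]

instance posNonempty (w : FreeSemigroup A) : Nonempty (Fin (wordList w).length) :=
  ⟨⟨0, wordList_length_pos w⟩⟩

theorem wordList_mul (u v : FreeSemigroup A) :
    wordList (u * v) = wordList u ++ wordList v := by
  rcases u with ⟨a, l⟩; rcases v with ⟨b, m⟩
  simp [wordList, FreeSemigroup.head_mul, FreeSemigroup.tail_mul]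

theorem interp_congr (w : List A) (φ : Form A) (v v' : ℕ → Fin w.length)
    (h : ∀ i ∈ φ.freeVars, v i = v' i) : Interp w φ v ↔ Interp w φ v' := by
  induction φ generalizing v v' with
  | letter a i =>
    simp only [Interp, h i (by simp [Form.freeVars])]
  | lt i j =>
    simp only [Interp, h i (by simp [Form.freeVars]),
      h j (by simp [Form.freeVars, Finset.mem_insert])]
  | not φ ih =>
    exact not_congr (ih v v' (fun i hi => h i hi))
  | and φ ψ ihφ ihψ =>
    exact and_congr (ihφ v v' (fun i hi => h i (by simp [Form.freeVars]; exact Or.inl hi)))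
      (ihψ v v' (fun i hi => h i (by simp [Form.freeVars]; exact Or.inr hi)))
  | ex n φ ih =>
    simp only [Interp]
    refine exists_congr fun p => ih _ _ fun i hi => ?_
    rcases eq_or_ne i n with rfl | hne
    · simp [Function.update]
    · simp only [Function.update_of_ne hne]
      exact h i (Finset.mem_sdiff.mpr ⟨hi, by simp [hne]⟩)

theorem models_iff_interp {w : FreeSemigroup A} {φ : Form A} (hs : IsSentence φ)
    (v : ℕ → Fin (wordList w).length) : Models w φ ↔ Interp (wordList w) φ v := by
  constructor
  · exact fun h => h v
  · intro h v'
    exact (interp_congr _ _ v v' (by simp [IsSentence] at hs; simp [hs])).mp h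

theorem models_and {w : FreeSemigroup A} {φ ψ : Form A} :
    Models w (.and φ ψ) ↔ Models w φ ∧ Models w ψ := by
  constructor
  · intro h; exact ⟨fun v => (h v).1, fun v => (h v).2⟩
  · rintro ⟨h1, h2⟩ v; exact ⟨h1 v, h2 v⟩

theorem models_not {w : FreeSemigroup A} {φ : Form A} (hs : IsSentence φ) :
    Models w (.not φ) ↔ ¬ Models w φ := by
  obtain ⟨p⟩ := posNonempty w
  constructor
  · intro h hm
    exact (h fun _ => p) (hm fun _ => p)
  · intro h v'
    intro hi
    exact h ((models_iff_interp hs v').mpr hi)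

theorem isSentence_not {φ : Form A} : IsSentence (Form.not φ) ↔ IsSentence φ := by
  simp [IsSentence, Form.freeVars]

theorem isSentence_and {φ ψ : Form A} (h1 : IsSentence φ) (h2 : IsSentence ψ) :
    IsSentence (Form.and φ ψ) := by
  simp [IsSentence, Form.freeVars] at *
  simp [h1, h2]

/-- disjunction -/
def Form.or (φ ψ : Form A) : Form A := .not (.and (.not φ) (.not ψ))

theorem isSentence_or {φ ψ : Form A} (h1 : IsSentence φ) (h2 : IsSentence ψ) :
    IsSentence (Form.or φ ψ) := by
  simp [IsSentence, Form.or, Form.freeVars] at *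
  simp [h1, h2]

theorem models_or {w : FreeSemigroup A} {φ ψ : Form A} (h1 : IsSentence φ)
    (h2 : IsSentence ψ) : Models w (Form.or φ ψ) ↔ Models w φ ∨ Models w ψ := by
  rw [Form.or, models_not (isSentence_and (isSentence_not.mpr h1) (isSentence_not.mpr h2)),
    models_and, models_not h1, models_not h2]
  tauto

theorem fod_union {L₁ L₂ : Set (FreeSemigroup A)} (h1 : FODefinable L₁)
    (h2 : FODefinable L₂) : FODefinable (L₁ ∪ L₂) := by
  obtain ⟨φ, hφ, rfl⟩ := h1
  obtain ⟨ψ, hψ, rfl⟩ := h2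
  refine ⟨Form.or φ ψ, isSentence_or hφ hψ, ?_⟩
  ext w; simp [LangOf, Set.mem_setOf_eq, models_or hφ hψ]

theorem fod_compl {L : Set (FreeSemigroup A)} (h : FODefinable L) : FODefinable Lᶜ := by
  obtain ⟨φ, hφ, rfl⟩ := h
  refine ⟨.not φ, isSentence_not.mpr hφ, ?_⟩
  ext w; simp [LangOf, Set.mem_setOf_eq, models_not hφ]

theorem fod_inter {L₁ L₂ : Set (FreeSemigroup A)} (h1 : FODefinable L₁)
    (h2 : FODefinable L₂) : FODefinable (L₁ ∩ L₂) := by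
  obtain ⟨φ, hφ, rfl⟩ := h1
  obtain ⟨ψ, hψ, rfl⟩ := h2
  refine ⟨Form.and φ ψ, isSentence_and hφ hψ, ?_⟩
  ext w; simp [LangOf, Set.mem_setOf_eq, models_and]

theorem fod_univ : FODefinable (Set.univ : Set (FreeSemigroup A)) := by
  refine ⟨.not (.ex 0 (.lt 0 0)), by simp [IsSentence, Form.freeVars], ?_⟩
  ext w
  simp only [Set.mem_univ, LangOf, Set.mem_setOf_eq, true_iff]
  intro v
  simp only [Interp]
  rintro ⟨p, hp⟩
  simp [Function.update] at hp

theorem fod_empty : FODefinable (∅ : Set (FreeSemigroup A)) := by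
  have := fod_compl (fod_univ (A := A))
  simpa using this

end Part1
/-! ### Part 1b: relativization, FO concatenation -/

section Part2
variable {A : Type}

namespace Form

/-- Bound on all variables (free or bound) occurring in a formula. -/
def maxVar : Form A → ℕ
  | .letter _ i => i
  | .lt i j => max i j
  | .not φ => φ.maxVar
  | .and φ ψ => max φ.maxVar ψ.maxVar
  | .ex n φ => max n φ.maxVar

/-- Relativize to positions `≤ x`. -/
def relLe (x : ℕ) : Form A → Form A
  | .letter a i => .letter a i
  | .lt i j => .lt i j
  | .not φ => .not (relLe x φ)
  | .and φ ψ => .and (relLe x φ) (relLe x ψ)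
  | .ex n φ => .ex n (.and (.not (.lt x n)) (relLe x φ))

/-- Relativize to positions `> x`. -/
def relGt (x : ℕ) : Form A → Form A
  | .letter a i => .letter a i
  | .lt i j => .lt i j
  | .not φ => .not (relGt x φ)
  | .and φ ψ => .and (relGt x φ) (relGt x ψ)
  | .ex n φ => .ex n (.and (.lt x n) (relGt x φ))

theorem freeVars_relLe (x : ℕ) (φ : Form A) :
    (relLe x φ).freeVars ⊆ φ.freeVars ∪ {x} := by
  induction φ with
  | letter a i => simp [relLe, freeVars]
  | lt i j =>
    simp only [relLe, freeVars]
    intro k hk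
    simp at hk ⊢
    tauto
  | not φ ih => simpa [relLe, freeVars] using ih
  | and φ ψ ih1 ih2 =>
    simp only [relLe, freeVars]
    intro i hi
    rcases Finset.mem_union.mp hi with h | h
    · rcases Finset.mem_union.mp (ih1 h) with h' | h'
      · exact Finset.mem_union_left _ (Finset.mem_union_left _ h')
      · exact Finset.mem_union_right _ h'
    · rcases Finset.mem_union.mp (ih2 h) with h' | h'
      · exact Finset.mem_union_left _ (Finset.mem_union_right _ h')
      · exact Finset.mem_union_right _ h'
  | ex n φ ih =>
    simp only [relLe, freeVars]
    intro i hi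
    rcases Finset.mem_sdiff.mp hi with ⟨hi1, hi2⟩
    rcases Finset.mem_union.mp hi1 with h | h
    · have : i ∈ ({x, n} : Finset ℕ) := by simpa [freeVars] using h
      rcases Finset.mem_insert.mp this with rfl | h'
      · exact Finset.mem_union_right _ (Finset.mem_singleton_self _)
      · exact absurd h' hi2
    · rcases Finset.mem_union.mp (ih h) with h' | h'
      · exact Finset.mem_union_left _ (Finset.mem_sdiff.mpr ⟨h', hi2⟩)
      · exact Finset.mem_union_right _ h'

theorem freeVars_relGt (x : ℕ) (φ : Form A) :
    (relGt x φ).freeVars ⊆ φ.freeVars ∪ {x} := by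
  induction φ with
  | letter a i => simp [relGt, freeVars]
  | lt i j =>
    simp only [relGt, freeVars]
    intro k hk
    simp at hk ⊢
    tauto
  | not φ ih => simpa [relGt, freeVars] using ih
  | and φ ψ ih1 ih2 =>
    simp only [relGt, freeVars]
    intro i hi
    rcases Finset.mem_union.mp hi with h | h
    · rcases Finset.mem_union.mp (ih1 h) with h' | h'
      · exact Finset.mem_union_left _ (Finset.mem_union_left _ h')
      · exact Finset.mem_union_right _ h'
    · rcases Finset.mem_union.mp (ih2 h) with h' | h'
      · exact Finset.mem_union_left _ (Finset.mem_union_right _ h')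
      · exact Finset.mem_union_right _ h'
  | ex n φ ih =>
    simp only [relGt, freeVars]
    intro i hi
    rcases Finset.mem_sdiff.mp hi with ⟨hi1, hi2⟩
    rcases Finset.mem_union.mp hi1 with h | h
    · have : i ∈ ({x, n} : Finset ℕ) := by simpa [freeVars] using h
      rcases Finset.mem_insert.mp this with rfl | h'
      · exact Finset.mem_union_right _ (Finset.mem_singleton_self _)
      · exact absurd h' hi2
    · rcases Finset.mem_union.mp (ih h) with h' | h'
      · exact Finset.mem_union_left _ (Finset.mem_sdiff.mpr ⟨h', hi2⟩)
      · exact Finset.mem_union_right _ h'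

end Form

theorem interp_cast {l l' : List A} (e : l = l') (φ : Form A) (v : ℕ → Fin l.length) :
    Interp l φ v ↔ Interp l' φ (fun i => Fin.cast (by rw [e]) (v i)) := by
  subst e
  exact interp_congr l φ v _ (fun i _ => by ext; simp)

theorem interp_relLe (x : ℕ) :
    ∀ (φ : Form A) (u v : List A) (_ : 0 < u.length), φ.maxVar < x →
    ∀ (σ : ℕ → Fin u.length) (τ : ℕ → Fin (u ++ v).length),
    (∀ i ∈ φ.freeVars, (τ i : ℕ) = (σ i : ℕ)) → ((τ x : ℕ) = u.length - 1) →
    (Interp (u ++ v) (Form.relLe x φ) τ ↔ Interp u φ σ) := by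
  intro φ
  induction φ with
  | letter a i =>
    intro u v hu hx σ τ hfv hτx
    have hi : (τ i : ℕ) = (σ i : ℕ) := hfv i (by simp [Form.freeVars])
    simp only [Form.relLe, Interp]
    rw [List.get_eq_getElem, List.get_eq_getElem]
    have h1 : ((τ i : ℕ)) < u.length := by rw [hi]; exact (σ i).isLt
    rw [show ((u ++ v)[(τ i : ℕ)] : A) = u[(τ i : ℕ)]'h1 from List.getElem_append_left h1]
    simp only [hi]
  | lt i j =>
    intro u v hu hx σ τ hfv hτx
    have hi : (τ i : ℕ) = (σ i : ℕ) := hfv i (by simp [Form.freeVars])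
    have hj : (τ j : ℕ) = (σ j : ℕ) := hfv j (by simp [Form.freeVars])
    simp only [Form.relLe, Interp, hi, hj]
  | not φ ih =>
    intro u v hu hx σ τ hfv hτx
    exact not_congr (ih u v hu hx σ τ hfv hτx)
  | and φ ψ ih1 ih2 =>
    intro u v hu hx σ τ hfv hτx
    have hx1 : φ.maxVar < x := lt_of_le_of_lt (le_max_left _ _) hx
    have hx2 : ψ.maxVar < x := lt_of_le_of_lt (le_max_right _ _) hx
    exact and_congr
      (ih1 u v hu hx1 σ τ (fun i hi => hfv i (by simp [Form.freeVars]; exact Or.inl hi)) hτx)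
      (ih2 u v hu hx2 σ τ (fun i hi => hfv i (by simp [Form.freeVars]; exact Or.inr hi)) hτx)
  | ex n φ ih =>
    intro u v hu hx σ τ hfv hτx
    have hnx : n ≠ x := by
      have : n < x := lt_of_le_of_lt (le_max_left _ _) hx
      omega
    have hxφ : φ.maxVar < x := lt_of_le_of_lt (le_max_right _ _) hx
    simp only [Form.relLe, Interp]
    constructor
    · rintro ⟨p, hnot, hp⟩
      have hple : ¬ ((Function.update τ n p x : ℕ) < (Function.update τ n p n : ℕ)) := by
        intro hc; exact hnot hc
      rw [Function.update_of_ne (Ne.symm hnx), Function.update_self] at hple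
      have hpu : (p : ℕ) < u.length := by omega
      refine ⟨⟨p, hpu⟩, ?_⟩
      refine (ih u v hu hxφ _ _ ?_ ?_).mp hp
      · intro i hi
        rcases eq_or_ne i n with rfl | hne
        · simp
        · rw [Function.update_of_ne hne, Function.update_of_ne hne]
          exact hfv i (Finset.mem_sdiff.mpr ⟨hi, by simp [hne]⟩)
      · rw [Function.update_of_ne (Ne.symm hnx)]; exact hτx
    · rintro ⟨q, hq⟩
      have hlen : u.length ≤ (u ++ v).length := by simp
      refine ⟨⟨(q : ℕ), lt_of_lt_of_le q.isLt hlen⟩, ?_, ?_⟩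
      · intro hc
        simp only [Interp, Function.update_of_ne (Ne.symm hnx), Function.update_self] at hc
        rw [hτx] at hc
        have := q.isLt
        omega
      · refine (ih u v hu hxφ (Function.update σ n q) _ ?_ ?_).mpr hq
        · intro i hi
          rcases eq_or_ne i n with rfl | hne
          · simp
          · rw [Function.update_of_ne hne, Function.update_of_ne hne]
            exact hfv i (Finset.mem_sdiff.mpr ⟨hi, by simp [hne]⟩)
        · rw [Function.update_of_ne (Ne.symm hnx)]; exact hτx

theorem interp_relGt (x : ℕ) :
    ∀ (φ : Form A) (u v : List A) (_ : 0 < u.length), φ.maxVar < x →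
    ∀ (σ : ℕ → Fin v.length) (τ : ℕ → Fin (u ++ v).length),
    (∀ i ∈ φ.freeVars, (τ i : ℕ) = u.length + (σ i : ℕ)) → ((τ x : ℕ) = u.length - 1) →
    (Interp (u ++ v) (Form.relGt x φ) τ ↔ Interp v φ σ) := by
  intro φ
  induction φ with
  | letter a i =>
    intro u v hu hx σ τ hfv hτx
    have hi : (τ i : ℕ) = u.length + (σ i : ℕ) := hfv i (by simp [Form.freeVars])
    simp only [Form.relGt, Interp]
    rw [List.get_eq_getElem, List.get_eq_getElem]
    have h1 : ((τ i : ℕ)) < (u ++ v).length := (τ i).isLt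
    have h2 : u.length ≤ (τ i : ℕ) := by omega
    rw [List.getElem_append_right h2]
    have h3 : (τ i : ℕ) - u.length = (σ i : ℕ) := by omega
    simp only [h3]
  | lt i j =>
    intro u v hu hx σ τ hfv hτx
    have hi : (τ i : ℕ) = u.length + (σ i : ℕ) := hfv i (by simp [Form.freeVars])
    have hj : (τ j : ℕ) = u.length + (σ j : ℕ) := hfv j (by simp [Form.freeVars])
    simp only [Form.relGt, Interp, hi, hj]
    omega
  | not φ ih =>
    intro u v hu hx σ τ hfv hτx
    exact not_congr (ih u v hu hx σ τ hfv hτx)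
  | and φ ψ ih1 ih2 =>
    intro u v hu hx σ τ hfv hτx
    have hx1 : φ.maxVar < x := lt_of_le_of_lt (le_max_left _ _) hx
    have hx2 : ψ.maxVar < x := lt_of_le_of_lt (le_max_right _ _) hx
    exact and_congr
      (ih1 u v hu hx1 σ τ (fun i hi => hfv i (by simp [Form.freeVars]; exact Or.inl hi)) hτx)
      (ih2 u v hu hx2 σ τ (fun i hi => hfv i (by simp [Form.freeVars]; exact Or.inr hi)) hτx)
  | ex n φ ih =>
    intro u v hu hx σ τ hfv hτx
    have hnx : n ≠ x := by
      have : n < x := lt_of_le_of_lt (le_max_left _ _) hx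
      omega
    have hxφ : φ.maxVar < x := lt_of_le_of_lt (le_max_right _ _) hx
    simp only [Form.relGt, Interp]
    constructor
    · rintro ⟨p, hlt, hp⟩
      have hpgt : ((Function.update τ n p x : ℕ) < (Function.update τ n p n : ℕ)) := hlt
      rw [Function.update_of_ne (Ne.symm hnx), Function.update_self] at hpgt
      have hpge : u.length ≤ (p : ℕ) := by omega
      have hpv : (p : ℕ) - u.length < v.length := by
        have := p.isLt
        simp only [List.length_append] at this
        omega
      refine ⟨⟨(p : ℕ) - u.length, hpv⟩, ?_⟩
      refine (ih u v hu hxφ _ _ ?_ ?_).mp hp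
      · intro i hi
        rcases eq_or_ne i n with rfl | hne
        · simp; omega
        · rw [Function.update_of_ne hne, Function.update_of_ne hne]
          exact hfv i (Finset.mem_sdiff.mpr ⟨hi, by simp [hne]⟩)
      · rw [Function.update_of_ne (Ne.symm hnx)]; exact hτx
    · rintro ⟨q, hq⟩
      have hqb : u.length + (q : ℕ) < (u ++ v).length := by
        simp only [List.length_append]
        omega
      refine ⟨⟨u.length + (q : ℕ), hqb⟩, ?_, ?_⟩
      · simp only [Interp, Function.update_of_ne (Ne.symm hnx), Function.update_self]
        rw [hτx]
        omega
      · refine (ih u v hu hxφ (Function.update σ n q) _ ?_ ?_).mpr hq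
        · intro i hi
          rcases eq_or_ne i n with rfl | hne
          · simp
          · rw [Function.update_of_ne hne, Function.update_of_ne hne]
            exact hfv i (Finset.mem_sdiff.mpr ⟨hi, by simp [hne]⟩)
        · rw [Function.update_of_ne (Ne.symm hnx)]; exact hτx

theorem wordList_injective : Function.Injective (wordList (A := A)) := by
  rintro ⟨a, l⟩ ⟨b, m⟩ h
  simp only [wordList, List.cons.injEq] at h
  simp [h.1, h.2]

theorem exists_words_of_append {l₁ l₂ : List A} (h₁ : l₁ ≠ []) (h₂ : l₂ ≠ [])
    {w : FreeSemigroup A} (hw : wordList w = l₁ ++ l₂) :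
    ∃ u v, wordList u = l₁ ∧ wordList v = l₂ ∧ w = u * v := by
  rcases l₁ with _ | ⟨a, t₁⟩; · exact absurd rfl h₁
  rcases l₂ with _ | ⟨b, t₂⟩; · exact absurd rfl h₂
  refine ⟨⟨a, t₁⟩, ⟨b, t₂⟩, rfl, rfl, ?_⟩
  apply wordList_injective
  rw [hw, wordList_mul]
  rfl

end Part2
/-! ### Part 1c: FO-definability of products and singletons -/

section Part3
variable {A : Type}

theorem fod_mul {P Q : Set (FreeSemigroup A)} (hP : FODefinable P) (hQ : FODefinable Q) :
    FODefinable (P * Q) := by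
  classical
  obtain ⟨φ₁, hs1, rfl⟩ := hP
  obtain ⟨φ₂, hs2, rfl⟩ := hQ
  have e1 : φ₁.freeVars = ∅ := hs1
  have e2 : φ₂.freeVars = ∅ := hs2
  set x := max φ₁.maxVar φ₂.maxVar + 1 with hxdef
  set y := x + 1 with hydef
  have hx1 : φ₁.maxVar < x := by
    have := le_max_left φ₁.maxVar φ₂.maxVar; omega
  have hx2 : φ₂.maxVar < x := by
    have := le_max_right φ₁.maxVar φ₂.maxVar; omega
  have hxy : x ≠ y := by omega
  refine ⟨.ex x (.and (.and (φ₁.relLe x) (φ₂.relGt x)) (.ex y (.lt x y))), ?_, ?_⟩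
  · unfold IsSentence
    simp only [Form.freeVars]
    apply Finset.eq_empty_of_forall_notMem
    intro i hi
    rcases Finset.mem_sdiff.mp hi with ⟨hi1, hi2⟩
    apply hi2
    simp only [Finset.mem_singleton]
    rcases Finset.mem_union.mp hi1 with h | h
    · rcases Finset.mem_union.mp h with h' | h'
      · have := Form.freeVars_relLe x φ₁ h'
        rw [e1] at this
        simpa using this
      · have := Form.freeVars_relGt x φ₂ h'
        rw [e2] at this
        simpa using this
    · rcases Finset.mem_sdiff.mp h with ⟨h', hne⟩
      simp only [Form.freeVars, Finset.mem_insert, Finset.mem_singleton] at h'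
      simp only [Finset.mem_singleton] at hne
      rcases h' with rfl | rfl
      · rfl
      · exact absurd rfl hne
  · ext w
    simp only [LangOf, Set.mem_setOf_eq]
    rw [Set.mem_mul]
    constructor
    · rintro ⟨u, hu, v, hv, rfl⟩
      intro τ
      have e : wordList (u * v) = wordList u ++ wordList v := wordList_mul u v
      rw [interp_cast e]
      set l₁ := wordList u with hl1def
      set l₂ := wordList v with hl2def
      have hpos1 : 0 < l₁.length := wordList_length_pos u
      have hpos2 : 0 < l₂.length := wordList_length_pos v
      have hp : l₁.length - 1 < (l₁ ++ l₂).length := by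
        simp; omega
      refine ⟨⟨l₁.length - 1, hp⟩, ⟨?_, ?_⟩, ?_⟩
      · refine (interp_relLe x φ₁ l₁ l₂ hpos1 hx1 (fun _ => ⟨0, hpos1⟩) _ ?_ ?_).mpr
          (hu (fun _ => ⟨0, hpos1⟩))
        · intro i hi; rw [e1] at hi; simp at hi
        · simp [Function.update_self]
      · refine (interp_relGt x φ₂ l₁ l₂ hpos1 hx2 (fun _ => ⟨0, hpos2⟩) _ ?_ ?_).mpr
          (hv (fun _ => ⟨0, hpos2⟩))
        · intro i hi; rw [e2] at hi; simp at hi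
        · simp [Function.update_self]
      · have hq : l₁.length < (l₁ ++ l₂).length := by simp; omega
        refine ⟨⟨l₁.length, hq⟩, ?_⟩
        simp only [Interp, Function.update_self]
        rw [Function.update_of_ne hxy, Function.update_self]
        simp
        omega

    · -- Models w Φ → split
      intro hM
      have hI := hM (fun _ => ⟨0, wordList_length_pos w⟩)
      obtain ⟨p, hand⟩ := hI
      obtain ⟨⟨h1, h2⟩, h3⟩ := hand
      obtain ⟨p', hpp'⟩ := h3
      have hplt : (p : ℕ) < (p' : ℕ) := by
        have := hpp'
        simp only [Interp, Function.update_self] at this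
        rwa [Function.update_of_ne hxy, Function.update_self] at this
      have hp1 : (p : ℕ) + 1 < (wordList w).length := lt_of_le_of_lt hplt p'.isLt
      have e : (wordList w).take ((p : ℕ) + 1) ++ (wordList w).drop ((p : ℕ) + 1)
          = wordList w := List.take_append_drop _ _
      have hlen1 : ((wordList w).take ((p : ℕ) + 1)).length = (p : ℕ) + 1 := by
        rw [List.length_take]; omega
      have hlen2 : 0 < ((wordList w).drop ((p : ℕ) + 1)).length := by
        rw [List.length_drop]; omega
      have hpos1 : 0 < ((wordList w).take ((p : ℕ) + 1)).length := by omega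
      have hAll1 : ∀ σ : ℕ → Fin ((wordList w).take ((p : ℕ) + 1)).length,
          Interp ((wordList w).take ((p : ℕ) + 1)) φ₁ σ := by
        intro σ
        have h1' := (interp_cast e.symm _ _).mp h1
        refine (interp_relLe x φ₁ _ _ hpos1 hx1 σ _ ?_ ?_).mp h1'
        · intro i hi; rw [e1] at hi; simp at hi
        · simp only [Function.comp, Fin.coe_cast, Function.update_self, Fin.cast]
          omega
      have hAll2 : ∀ σ : ℕ → Fin ((wordList w).drop ((p : ℕ) + 1)).length,
          Interp ((wordList w).drop ((p : ℕ) + 1)) φ₂ σ := by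
        intro σ
        have h2' := (interp_cast e.symm _ _).mp h2
        refine (interp_relGt x φ₂ _ _ hpos1 hx2 σ _ ?_ ?_).mp h2'
        · intro i hi; rw [e2] at hi; simp at hi
        · simp only [Function.comp, Fin.coe_cast, Function.update_self, Fin.cast]
          omega
      obtain ⟨u, v, hwu, hwv, rfl⟩ :=
        exists_words_of_append
          (by intro hc; rw [hc] at hlen1; simp at hlen1)
          (by intro hc; rw [hc] at hlen2; simp at hlen2) e.symm
      refine ⟨u, ?_, v, ?_, rfl⟩
      · intro σ
        rw [interp_cast hwu]
        exact hAll1 _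
      · intro σ
        rw [interp_cast hwv]
        exact hAll2 _

theorem list_eq_single_iff {a : A} {l : List A} (hpos : 0 < l.length) :
    l = [a] ↔ (¬ 2 ≤ l.length ∧ ∀ p : Fin l.length, l.get p = a) := by
  constructor
  · intro h
    subst h
    constructor
    · simp
    · intro p
      have : (p : ℕ) = 0 := by
        have := p.isLt
        have h1 : ([a] : List A).length = 1 := rfl
        omega
      simp [List.get_eq_getElem, this]
  · rintro ⟨h1, h2⟩
    rcases l with _ | ⟨b, t⟩
    · simp at hpos
    · rcases t with _ | ⟨c, t'⟩
      · have := h2 ⟨0, by simp⟩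
        simp [List.get_eq_getElem] at this
        rw [this]
      · simp at h1

theorem fod_single (a : A) : FODefinable {w : FreeSemigroup A | wordList w = [a]} := by
  refine ⟨.and (.not (.ex 0 (.ex 1 (.lt 0 1)))) (.not (.ex 0 (.not (.letter a 0)))), ?_, ?_⟩
  · unfold IsSentence
    simp [Form.freeVars]
  · ext w
    simp only [Set.mem_setOf_eq, LangOf]
    have hpos : 0 < (wordList w).length := wordList_length_pos w
    have hM1 : Models w (.ex 0 (.ex 1 (.lt 0 1)) : Form A) ↔ 2 ≤ (wordList w).length := by
      rw [models_iff_interp (by unfold IsSentence; simp [Form.freeVars]) (fun _ => ⟨0, hpos⟩)]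
      simp only [Interp]
      constructor
      · rintro ⟨p, q, hpq⟩
        rw [Function.update_of_ne (by omega : (0:ℕ) ≠ 1), Function.update_self,
          Function.update_self] at hpq
        have := q.isLt
        omega
      · intro h2
        refine ⟨⟨0, hpos⟩, ⟨1, by omega⟩, ?_⟩
        rw [Function.update_of_ne (by omega : (0:ℕ) ≠ 1), Function.update_self,
          Function.update_self]
        simp
    have hM2 : Models w (.ex 0 (.not (.letter a 0)) : Form A) ↔
        ∃ p : Fin (wordList w).length, (wordList w).get p ≠ a := by
      rw [models_iff_interp (by unfold IsSentence; simp [Form.freeVars]) (fun _ => ⟨0, hpos⟩)]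
      simp only [Interp]
      constructor
      · rintro ⟨p, hp⟩
        rw [Function.update_self] at hp
        exact ⟨p, hp⟩
      · rintro ⟨p, hp⟩
        refine ⟨p, ?_⟩
        rw [Function.update_self]
        exact hp
    rw [models_and, models_not (by unfold IsSentence; simp [Form.freeVars]),
      models_not (by unfold IsSentence; simp [Form.freeVars]), hM1, hM2,
      list_eq_single_iff hpos]
    push_neg
    tauto

end Part3
/-! ### Part 2: Ehrenfeucht–Fraïssé games on words -/

section EF
variable {A : Type}

/-- Compatibility of a list of position pairs. -/
def Compat (w w' : List A) (ps : List (ℕ × ℕ)) : Prop :=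
  ∀ pr ∈ ps, pr.1 < w.length ∧ pr.2 < w'.length ∧ w[pr.1]? = w'[pr.2]? ∧
    ∀ qr ∈ ps, (pr.1 < qr.1 ↔ pr.2 < qr.2)

/-- `k`-round EF game equivalence with played pairs `ps`. -/
def GE : ℕ → List A → List A → List (ℕ × ℕ) → Prop
  | 0, w, w', ps => Compat w w' ps
  | k+1, w, w', ps => Compat w w' ps ∧
      (∀ p < w.length, ∃ p' < w'.length, GE k w w' ((p, p') :: ps)) ∧
      (∀ p' < w'.length, ∃ p < w.length, GE k w w' ((p, p') :: ps))

theorem compat_subset {w w' : List A} {ps qs : List (ℕ × ℕ)}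
    (h : Compat w w' ps) (hq : ∀ x ∈ qs, x ∈ ps) : Compat w w' qs :=
  fun pr hpr => ⟨(h pr (hq _ hpr)).1, (h pr (hq _ hpr)).2.1, (h pr (hq _ hpr)).2.2.1,
    fun qr hqr => (h pr (hq _ hpr)).2.2.2 qr (hq _ hqr)⟩

theorem compat_nil {w w' : List A} : Compat w w' [] := by
  intro pr hpr; simp at hpr

theorem GE_compat : ∀ {k : ℕ} {w w' : List A} {ps}, GE k w w' ps → Compat w w' ps
  | 0, _, _, _, h => h
  | (_+1), _, _, _, h => h.1

theorem GE_subset {k : ℕ} {w w' : List A} : ∀ {ps qs : List (ℕ × ℕ)},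
    GE k w w' ps → (∀ x ∈ qs, x ∈ ps) → GE k w w' qs := by
  induction k with
  | zero => intro ps qs h hq; exact compat_subset h hq
  | succ k ih =>
    rintro ps qs ⟨hc, hf, hb⟩ hq
    refine ⟨compat_subset hc hq, ?_, ?_⟩
    · intro p hp
      obtain ⟨p', hp', hg⟩ := hf p hp
      refine ⟨p', hp', ih hg ?_⟩
      intro x hx
      rcases List.mem_cons.mp hx with rfl | hx
      · exact List.mem_cons_self
      · exact List.mem_cons_of_mem _ (hq _ hx)
    · intro p' hp'
      obtain ⟨p, hp, hg⟩ := hb p' hp'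
      refine ⟨p, hp, ih hg ?_⟩
      intro x hx
      rcases List.mem_cons.mp hx with rfl | hx
      · exact List.mem_cons_self
      · exact List.mem_cons_of_mem _ (hq _ hx)

theorem GE_mono {k : ℕ} {w w' : List A} : ∀ {ps : List (ℕ × ℕ)},
    GE (k+1) w w' ps → GE k w w' ps := by
  induction k with
  | zero => intro ps h; exact h.1
  | succ k ih =>
    rintro ps ⟨hc, hf, hb⟩
    refine ⟨hc, ?_, ?_⟩
    · intro p hp
      obtain ⟨p', hp', hg⟩ := hf p hp
      exact ⟨p', hp', ih hg⟩
    · intro p' hp'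
      obtain ⟨p, hp, hg⟩ := hb p' hp'
      exact ⟨p, hp, ih hg⟩

theorem GE_of_le : ∀ {k j : ℕ} {w w' : List A} {ps : List (ℕ × ℕ)}, j ≤ k →
    GE k w w' ps → GE j w w' ps := by
  intro k
  induction k with
  | zero =>
    intro j w w' ps hj h
    have : j = 0 := by omega
    subst this
    exact h
  | succ k ih =>
    intro j w w' ps hj h
    rcases Nat.eq_or_lt_of_le hj with rfl | hlt
    · exact h
    · exact ih (by omega) (GE_mono h)

theorem compat_symm {w w' : List A} {ps : List (ℕ × ℕ)} (h : Compat w w' ps) :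
    Compat w' w (ps.map Prod.swap) := by
  intro pr hpr
  obtain ⟨qr, hqr, rfl⟩ := List.mem_map.mp hpr
  obtain ⟨h1, h2, h3, h4⟩ := h qr hqr
  refine ⟨h2, h1, h3.symm, ?_⟩
  intro rr hrr
  obtain ⟨sr, hsr, rfl⟩ := List.mem_map.mp hrr
  exact (h4 sr hsr).symm

theorem GE_symm {k : ℕ} {w w' : List A} : ∀ {ps : List (ℕ × ℕ)},
    GE k w w' ps → GE k w' w (ps.map Prod.swap) := by
  induction k with
  | zero => intro ps h; exact compat_symm h
  | succ k ih =>
    rintro ps ⟨hc, hf, hb⟩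
    refine ⟨compat_symm hc, ?_, ?_⟩
    · intro p' hp'
      obtain ⟨p, hp, hg⟩ := hb p' hp'
      exact ⟨p, hp, ih hg⟩
    · intro p hp
      obtain ⟨p', hp', hg⟩ := hf p hp
      exact ⟨p', hp', ih hg⟩

theorem GE_refl {k : ℕ} {w : List A} : ∀ {ps : List (ℕ × ℕ)},
    (∀ pr ∈ ps, pr.1 = pr.2 ∧ pr.1 < w.length) → GE k w w ps := by
  induction k with
  | zero =>
    intro ps h pr hpr
    obtain ⟨he, hb⟩ := h pr hpr
    refine ⟨hb, by omega, by rw [he], ?_⟩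
    intro qr hqr
    obtain ⟨he', _⟩ := h qr hqr
    rw [he, he']
  | succ k ih =>
    intro ps h
    refine ⟨?_, ?_, ?_⟩
    · intro pr hpr
      obtain ⟨he, hb⟩ := h pr hpr
      refine ⟨hb, by omega, by rw [he], ?_⟩
      intro qr hqr
      obtain ⟨he', _⟩ := h qr hqr
      rw [he, he']
    · intro p hp
      refine ⟨p, hp, ih ?_⟩
      intro pr hpr
      rcases List.mem_cons.mp hpr with rfl | hpr
      · exact ⟨rfl, hp⟩
      · exact h pr hpr
    · intro p hp
      refine ⟨p, hp, ih ?_⟩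
      intro pr hpr
      rcases List.mem_cons.mp hpr with rfl | hpr
      · exact ⟨rfl, hp⟩
      · exact h pr hpr

/-- Shift a pair list for an append on the left. -/
def shiftPairs (a b : ℕ) (qs : List (ℕ × ℕ)) : List (ℕ × ℕ) :=
  qs.map fun pr => (pr.1 + a, pr.2 + b)

theorem compat_append {u u' v v' : List A} {ps qs : List (ℕ × ℕ)}
    (hp : Compat u u' ps) (hq : Compat v v' qs) :
    Compat (u ++ v) (u' ++ v') (ps ++ shiftPairs u.length u'.length qs) := by
  intro pr hpr
  rcases List.mem_append.mp hpr with hin | hin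
  · obtain ⟨h1, h2, h3, h4⟩ := hp pr hin
    refine ⟨by simp; omega, by simp; omega, ?_, ?_⟩
    · rw [List.getElem?_append, List.getElem?_append, if_pos h1, if_pos h2]
      exact h3
    · intro qr hqr
      rcases List.mem_append.mp hqr with hin' | hin'
      · exact h4 qr hin'
      · obtain ⟨sr, _, rfl⟩ := List.mem_map.mp hin'
        simp only
        constructor <;> intro <;> omega
  · obtain ⟨sr, hsr, rfl⟩ := List.mem_map.mp hin
    obtain ⟨h1, h2, h3, h4⟩ := hq sr hsr
    refine ⟨by simp; omega, by simp; omega, ?_, ?_⟩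
    · have e1 : (u ++ v)[sr.1 + u.length]? = v[sr.1]? := by
        rw [List.getElem?_append_right (by omega)]
        congr 1
        omega
      have e2 : (u' ++ v')[sr.2 + u'.length]? = v'[sr.2]? := by
        rw [List.getElem?_append_right (by omega)]
        congr 1
        omega
      rw [e1, e2]
      exact h3
    · intro qr hqr
      rcases List.mem_append.mp hqr with hin' | hin'
      · obtain ⟨b1, b2, _, _⟩ := hp qr hin'
        simp only
        constructor <;> intro <;> omega
      · obtain ⟨tr, htr, rfl⟩ := List.mem_map.mp hin'
        have := h4 tr htr
        simp only
        constructor <;> intro h <;> omega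

theorem GE_append {k : ℕ} {u u' v v' : List A} : ∀ {ps qs : List (ℕ × ℕ)},
    GE k u u' ps → GE k v v' qs →
    GE k (u ++ v) (u' ++ v') (ps ++ shiftPairs u.length u'.length qs) := by
  induction k with
  | zero => intro ps qs h1 h2; exact compat_append h1 h2
  | succ k ih =>
    rintro ps qs ⟨hc1, hf1, hb1⟩ ⟨hc2, hf2, hb2⟩
    refine ⟨compat_append hc1 hc2, ?_, ?_⟩
    · intro p hp
      by_cases hpu : p < u.length
      · obtain ⟨p', hp', hg⟩ := hf1 p hpu
        refine ⟨p', by simp; omega, ?_⟩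
        have := ih hg (GE_mono ⟨hc2, hf2, hb2⟩)
        exact this
      · have hi : p - u.length < v.length := by
          simp at hp; omega
        obtain ⟨i', hi', hg⟩ := hf2 (p - u.length) hi
        refine ⟨i' + u'.length, by simp; omega, ?_⟩
        have base := ih (GE_mono ⟨hc1, hf1, hb1⟩) hg
        refine GE_subset base ?_
        intro x hx
        rcases List.mem_cons.mp hx with rfl | hx
        · apply List.mem_append.mpr
          right
          refine List.mem_map.mpr ⟨(p - u.length, i'), List.mem_cons_self, ?_⟩
          have hpp : p - u.length + u.length = p := Nat.sub_add_cancel (by omega)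
          simp [hpp]
        · rcases List.mem_append.mp hx with h' | h'
          · exact List.mem_append.mpr (Or.inl h')
          · exact List.mem_append.mpr (Or.inr (List.mem_cons_of_mem _ h'))
    · intro p' hp'
      by_cases hpu : p' < u'.length
      · obtain ⟨p, hp, hg⟩ := hb1 p' hpu
        refine ⟨p, by simp; omega, ?_⟩
        exact ih hg (GE_mono ⟨hc2, hf2, hb2⟩)
      · have hi : p' - u'.length < v'.length := by
          simp at hp'; omega
        obtain ⟨i, hi', hg⟩ := hb2 (p' - u'.length) hi
        refine ⟨i + u.length, by simp; omega, ?_⟩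
        have base := ih (GE_mono ⟨hc1, hf1, hb1⟩) hg
        refine GE_subset base ?_
        intro x hx
        rcases List.mem_cons.mp hx with rfl | hx
        · apply List.mem_append.mpr
          right
          refine List.mem_map.mpr ⟨(i, p' - u'.length), List.mem_cons_self, ?_⟩
          have hpp : p' - u'.length + u'.length = p' := Nat.sub_add_cancel (by omega)
          simp [hpp]
        · rcases List.mem_append.mp hx with h' | h'
          · exact List.mem_append.mpr (Or.inl h')
          · exact List.mem_append.mpr (Or.inr (List.mem_cons_of_mem _ h'))

end EF
/-! ### Part 2b: power lemma and EF theorem -/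

section Power
variable {A : Type}

def lpow (u : List A) : ℕ → List A
  | 0 => []
  | n+1 => u ++ lpow u n

theorem lpow_length (u : List A) : ∀ n, (lpow u n).length = n * u.length
  | 0 => by simp [lpow]
  | n+1 => by
    simp [lpow, lpow_length u n]
    ring

theorem lpow_one (u : List A) : lpow u 1 = u := by simp [lpow]

theorem lpow_add (u : List A) (a b : ℕ) : lpow u (a + b) = lpow u a ++ lpow u b := by
  induction a with
  | zero => simp [lpow]
  | succ a ih =>
    have e : a + 1 + b = (a + b) + 1 := by omega
    rw [e]
    show u ++ lpow u (a + b) = (u ++ lpow u a) ++ lpow u b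
    rw [ih, List.append_assoc]

theorem lpow_move {k : ℕ}
    (ih : ∀ (u : List A) (m n : ℕ), 3^k ≤ m → 3^k ≤ n → GE k (lpow u m) (lpow u n) [])
    (u : List A) (m n : ℕ) (hm : 3^(k+1) ≤ m) (hn : 3^(k+1) ≤ n)
    (p : ℕ) (hp : p < (lpow u m).length) :
    ∃ p' < (lpow u n).length, GE k (lpow u m) (lpow u n) [(p, p')] := by
  have hT : 1 ≤ 3^k := Nat.one_le_pow _ _ (by norm_num)
  have hm' : 3 * 3^k ≤ m := by rw [pow_succ] at hm; omega
  have hn' : 3 * 3^k ≤ n := by rw [pow_succ] at hn; omega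
  rw [lpow_length] at hp
  have hu : 0 < u.length := by
    rcases Nat.eq_zero_or_pos u.length with h0 | h
    · rw [h0, Nat.mul_zero] at hp; omega
    · exact h
  obtain ⟨j, hjdef⟩ : ∃ j, j = p / u.length := ⟨_, rfl⟩
  obtain ⟨off, hoffdef⟩ : ∃ o, o = p % u.length := ⟨_, rfl⟩
  have hoff_lt : off < u.length := by rw [hoffdef]; exact Nat.mod_lt _ hu
  have hsplit : u.length * j + off = p := by
    rw [hjdef, hoffdef]; exact Nat.div_add_mod p u.length
  have hcomm : u.length * j = j * u.length := Nat.mul_comm _ _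
  have hjm : j < m := by
    rw [hjdef]
    exact Nat.div_lt_of_lt_mul (by rw [Nat.mul_comm]; exact hp)
  have key : ∀ j' : ℕ, j' < n →
      GE k (lpow u j) (lpow u j') [] →
      GE k (lpow u (m - 1 - j)) (lpow u (n - 1 - j')) [] →
      ∃ p' < (lpow u n).length, GE k (lpow u m) (lpow u n) [(p, p')] := by
    intro j' hj'n gl gr
    have g1 : GE k u u [(off, off)] := by
      refine GE_refl ?_
      intro pr hpr
      rcases List.mem_cons.mp hpr with rfl | h
      · exact ⟨rfl, hoff_lt⟩
      · simp at h
    have g2 := GE_append gl g1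
    have g3 := GE_append g2 gr
    simp only [shiftPairs, List.map_cons, List.map_nil, List.nil_append, List.append_nil,
      lpow_length, List.length_append, lpow_one] at g3
    have hA : lpow u (j+1) = lpow u j ++ u := by rw [lpow_add, lpow_one]
    have hA' : lpow u (j'+1) = lpow u j' ++ u := by rw [lpow_add, lpow_one]
    have hB : lpow u m = (lpow u j ++ u) ++ lpow u (m - 1 - j) := by
      rw [← hA, ← lpow_add]
      congr 1
      omega
    have hB' : lpow u n = (lpow u j' ++ u) ++ lpow u (n - 1 - j') := by
      rw [← hA', ← lpow_add]
      congr 1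
      omega
    rw [← hB, ← hB'] at g3
    have hpe : off + j * u.length = p := by omega
    rw [hpe] at g3
    refine ⟨off + j' * u.length, ?_, g3⟩
    rw [lpow_length]
    have e1 : (j' + 1) * u.length = j' * u.length + u.length := by ring
    have e2 : (j' + 1) * u.length ≤ n * u.length := Nat.mul_le_mul_right _ (by omega)
    omega
  by_cases h1 : j < 3^k
  · refine key j (by omega) (GE_refl (by intro pr hpr; simp at hpr)) ?_
    exact ih u (m - 1 - j) (n - 1 - j) (by omega) (by omega)
  · by_cases h2 : m - 1 - j < 3^k
    · have hj' : n - 1 - (n - 1 - (m - 1 - j)) = m - 1 - j := by omega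
      refine key (n - 1 - (m - 1 - j)) (by omega)
        (ih u j (n - 1 - (m - 1 - j)) (by omega) (by omega)) ?_
      rw [hj']
      exact GE_refl (by intro pr hpr; simp at hpr)
    · exact key (3^k) (by omega) (ih u j (3^k) (by omega) (by omega))
        (ih u (m - 1 - j) (n - 1 - 3^k) (by omega) (by omega))

theorem GE_lpow : ∀ (k : ℕ) (u : List A) (m n : ℕ), 3^k ≤ m → 3^k ≤ n →
    GE k (lpow u m) (lpow u n) [] := by
  intro k
  induction k with
  | zero =>
    intro u m n _ _
    exact compat_nil
  | succ k ih =>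
    intro u m n hm hn
    refine ⟨compat_nil, ?_, ?_⟩
    · intro p hp
      exact lpow_move ih u m n hm hn p hp
    · intro p' hp'
      obtain ⟨p, h1, h2⟩ := lpow_move ih u n m hn hm p' hp'
      refine ⟨p, h1, ?_⟩
      have := GE_symm h2
      simpa using this

theorem GE_context (k : ℕ) (x y u : List A) {m n : ℕ} (hm : 3^k ≤ m) (hn : 3^k ≤ n) :
    GE k (x ++ (lpow u m ++ y)) (x ++ (lpow u n ++ y)) [] := by
  have h1 := GE_append (GE_lpow k u m n hm hn) (GE_refl (w := y) (ps := []) (by simp))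
  have h2 := GE_append (GE_refl (w := x) (ps := []) (by simp)) h1
  simpa [shiftPairs] using h2

theorem EF_interp : ∀ (φ : Form A) (k : ℕ) (w w' : List A) (ps : List (ℕ × ℕ))
    (v : ℕ → Fin w.length) (v' : ℕ → Fin w'.length),
    GE k w w' ps → φ.rank ≤ k →
    (∀ i ∈ φ.freeVars, ((v i : ℕ), (v' i : ℕ)) ∈ ps) →
    (Interp w φ v ↔ Interp w' φ v') := by
  intro φ
  induction φ with
  | letter a i =>
    intro k w w' ps v v' hg _ hfv
    have hmem := hfv i (by simp [Form.freeVars])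
    obtain ⟨h1, h2, h3, _⟩ := GE_compat hg _ hmem
    simp only [Interp]
    rw [List.get_eq_getElem, List.get_eq_getElem]
    rw [List.getElem?_eq_getElem h1, List.getElem?_eq_getElem h2] at h3
    rw [Option.some_inj] at h3
    rw [h3]
  | lt i j =>
    intro k w w' ps v v' hg _ hfv
    have hmi := hfv i (by simp [Form.freeVars])
    have hmj := hfv j (by simp [Form.freeVars])
    obtain ⟨_, _, _, h4⟩ := GE_compat hg _ hmi
    simp only [Interp]
    exact h4 _ hmj
  | not ψ ihψ =>
    intro k w w' ps v v' hg hr hfv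
    exact not_congr (ihψ k w w' ps v v' hg hr hfv)
  | and ψ χ ihψ ihχ =>
    intro k w w' ps v v' hg hr hfv
    simp only [Form.rank, max_le_iff] at hr
    exact and_congr
      (ihψ k w w' ps v v' hg hr.1
        (fun i hi => hfv i (by simp [Form.freeVars]; exact Or.inl hi)))
      (ihχ k w w' ps v v' hg hr.2
        (fun i hi => hfv i (by simp [Form.freeVars]; exact Or.inr hi)))
  | ex n ψ ihψ =>
    intro k w w' ps v v' hg hr hfv
    simp only [Form.rank] at hr
    obtain ⟨k', rfl⟩ : ∃ k', k = k' + 1 := ⟨k - 1, by omega⟩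
    obtain ⟨hc, hf, hb⟩ := hg
    simp only [Interp]
    constructor
    · rintro ⟨p, hp⟩
      obtain ⟨p', hp', hg'⟩ := hf (p : ℕ) p.isLt
      refine ⟨⟨p', hp'⟩, ?_⟩
      refine (ihψ k' w w' _ _ _ hg' (by omega) ?_).mp hp
      intro i hi
      rcases eq_or_ne i n with rfl | hne
      · simp only [Function.update_self]
        exact List.mem_cons_self
      · rw [Function.update_of_ne hne, Function.update_of_ne hne]
        exact List.mem_cons_of_mem _ (hfv i (Finset.mem_sdiff.mpr ⟨hi, by simp [hne]⟩))
    · rintro ⟨p', hp'⟩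
      obtain ⟨p, hp, hg'⟩ := hb (p' : ℕ) p'.isLt
      refine ⟨⟨p, hp⟩, ?_⟩
      refine (ihψ k' w w' _ _ _ hg' (by omega) ?_).mpr hp'
      intro i hi
      rcases eq_or_ne i n with rfl | hne
      · simp only [Function.update_self]
        exact List.mem_cons_self
      · rw [Function.update_of_ne hne, Function.update_of_ne hne]
        exact List.mem_cons_of_mem _ (hfv i (Finset.mem_sdiff.mpr ⟨hi, by simp [hne]⟩))

theorem models_iff_of_GE {k : ℕ} {w w' : FreeSemigroup A} {φ : Form A}
    (hg : GE k (wordList w) (wordList w') []) (hs : IsSentence φ) (hr : φ.rank ≤ k) :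
    (Models w φ ↔ Models w' φ) := by
  have e : φ.freeVars = ∅ := hs
  constructor
  · intro h v'
    refine (EF_interp φ k _ _ [] (fun _ => ⟨0, wordList_length_pos w⟩) v' hg hr ?_).mp (h _)
    intro i hi
    rw [e] at hi
    simp at hi
  · intro h v
    refine (EF_interp φ k _ _ [] v (fun _ => ⟨0, wordList_length_pos w'⟩) hg hr ?_).mpr (h _)
    intro i hi
    rw [e] at hi
    simp at hi

end Power
/-! ### Part 3: the syntactic quotient; FO-definable ⇒ aperiodic recognizer -/

section Syntactic
variable {A : Type}

/-- Syntactic congruence of a language. -/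
def SynRel (L : Set (FreeSemigroup A)) (u v : FreeSemigroup A) : Prop :=
  (u ∈ L ↔ v ∈ L) ∧ (∀ x, x * u ∈ L ↔ x * v ∈ L) ∧ (∀ y, u * y ∈ L ↔ v * y ∈ L) ∧
  (∀ x y, x * (u * y) ∈ L ↔ x * (v * y) ∈ L)

theorem synRel_equivalence (L : Set (FreeSemigroup A)) : Equivalence (SynRel L) := by
  constructor
  · intro u
    exact ⟨Iff.rfl, fun _ => Iff.rfl, fun _ => Iff.rfl, fun _ _ => Iff.rfl⟩
  · rintro u v ⟨h1, h2, h3, h4⟩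
    exact ⟨h1.symm, fun x => (h2 x).symm, fun y => (h3 y).symm, fun x y => (h4 x y).symm⟩
  · rintro u v w ⟨h1, h2, h3, h4⟩ ⟨g1, g2, g3, g4⟩
    exact ⟨h1.trans g1, fun x => (h2 x).trans (g2 x), fun y => (h3 y).trans (g3 y),
      fun x y => (h4 x y).trans (g4 x y)⟩

theorem synRel_mul_right {L : Set (FreeSemigroup A)} {u u' : FreeSemigroup A}
    (hu : SynRel L u u') (v : FreeSemigroup A) : SynRel L (u * v) (u' * v) := by
  obtain ⟨h1, h2, h3, h4⟩ := hu
  refine ⟨h3 v, fun x => h4 x v, fun y => ?_, fun x y => ?_⟩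
  · rw [mul_assoc, mul_assoc]
    exact h3 (v * y)
  · rw [mul_assoc, mul_assoc]
    exact h4 x (v * y)

theorem synRel_mul_left {L : Set (FreeSemigroup A)} {v v' : FreeSemigroup A}
    (hv : SynRel L v v') (u : FreeSemigroup A) : SynRel L (u * v) (u * v') := by
  obtain ⟨h1, h2, h3, h4⟩ := hv
  refine ⟨h2 u, fun x => ?_, fun y => ?_, fun x y => ?_⟩
  · rw [← mul_assoc, ← mul_assoc]
    exact h2 (x * u)
  · rw [mul_assoc, mul_assoc]
    exact h4 u y
  · have := h4 (x * u) y
    rw [mul_assoc, mul_assoc] at this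
    rw [mul_assoc, mul_assoc]
    exact this

theorem synRel_mul {L : Set (FreeSemigroup A)} {u u' v v' : FreeSemigroup A}
    (hu : SynRel L u u') (hv : SynRel L v v') : SynRel L (u * v) (u' * v') :=
  (synRel_equivalence L).trans (synRel_mul_right hu v) (synRel_mul_left hv u')

theorem spow_add {M : Type} [Semigroup M] (x : M) (a b : ℕ) :
    spow x a * spow x b = spow x (a + b + 1) := by
  induction b with
  | zero => rfl
  | succ b ih =>
    show spow x a * (spow x b * x) = _
    rw [← mul_assoc, ih]
    rfl

theorem wordList_spow (u : FreeSemigroup A) :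
    ∀ n, wordList (spow u n) = lpow (wordList u) (n + 1)
  | 0 => by rw [lpow_one]; rfl
  | n+1 => by
    show wordList (spow u n * u) = _
    rw [wordList_mul, wordList_spow u n, lpow_add (wordList u) (n+1) 1,
      lpow_one]

theorem synRel_spow_langOf (φ : Form A) (hs : IsSentence φ) (u : FreeSemigroup A)
    {a b : ℕ} (ha : 3 ^ φ.rank ≤ a + 1) (hb : 3 ^ φ.rank ≤ b + 1) :
    SynRel (LangOf φ) (spow u a) (spow u b) := by
  set k := φ.rank with hk
  have hmem : ∀ w : FreeSemigroup A, w ∈ LangOf φ ↔ Models w φ := fun w => Iff.rfl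
  refine ⟨?_, ?_, ?_, ?_⟩
  · rw [hmem, hmem]
    refine models_iff_of_GE ?_ hs le_rfl
    rw [wordList_spow, wordList_spow]
    exact GE_lpow k _ _ _ ha hb
  · intro x
    rw [hmem, hmem]
    refine models_iff_of_GE ?_ hs le_rfl
    rw [wordList_mul, wordList_mul, wordList_spow, wordList_spow]
    have := GE_context k (wordList x) [] (wordList u) ha hb
    simpa using this
  · intro y
    rw [hmem, hmem]
    refine models_iff_of_GE ?_ hs le_rfl
    rw [wordList_mul, wordList_mul, wordList_spow, wordList_spow]
    have := GE_context k [] (wordList y) (wordList u) ha hb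
    simpa using this
  · intro x y
    rw [hmem, hmem]
    refine models_iff_of_GE ?_ hs le_rfl
    rw [wordList_mul, wordList_mul, wordList_mul, wordList_mul,
      wordList_spow, wordList_spow]
    exact GE_context k (wordList x) (wordList y) (wordList u) ha hb

theorem forward_dir [Fintype A] (L : Set (FreeSemigroup A)) (hreg : Regular L)
    (hfo : FODefinable L) :
    ∃ (S : Type) (_ : Semigroup S) (_ : Fintype S)
      (α : FreeSemigroup A →ₙ* S) (F : Set S),
      L = ⇑α ⁻¹' F ∧ Aperiodic S := by
  classical
  obtain ⟨φ, hs, hLdef⟩ := hfo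
  subst hLdef
  obtain ⟨T, iT, fT, β, F', hLF⟩ := hreg
  set k := φ.rank with hk
  let s : Setoid (FreeSemigroup A) := ⟨SynRel (LangOf φ), synRel_equivalence _⟩
  have hsound : ∀ {u v : FreeSemigroup A}, SynRel (LangOf φ) u v →
      Quotient.mk s u = Quotient.mk s v := fun h => Quotient.sound h
  letI Qsg : Semigroup (Quotient s) :=
    { mul := fun
        a b => Quotient.liftOn₂ a b (fun u v => Quotient.mk s (u * v))
          (fun u v u' v' hu hv => Quotient.sound (synRel_mul hu hv)),
      mul_assoc := by
        intro a b c
        induction a using Quotient.inductionOn with | _ u => ?_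
        induction b using Quotient.inductionOn with | _ v => ?_
        induction c using Quotient.inductionOn with | _ w => ?_
        show Quotient.mk s (u * v * w) = Quotient.mk s (u * (v * w))
        rw [mul_assoc] }
  have hmulmk : ∀ u v : FreeSemigroup A,
      Quotient.mk s u * Quotient.mk s v = Quotient.mk s (u * v) := fun _ _ => rfl
  -- finiteness
  have hfactor : ∀ u v : FreeSemigroup A, β u = β v → SynRel (LangOf φ) u v := by
    intro u v huv
    have hm : ∀ w : FreeSemigroup A, w ∈ LangOf φ ↔ β w ∈ F' := by
      intro w
      rw [hLF]
      rfl
    refine ⟨?_, ?_, ?_, ?_⟩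
    · rw [hm, hm, huv]
    · intro x
      rw [hm, hm, map_mul, map_mul, huv]
    · intro y
      rw [hm, hm, map_mul, map_mul, huv]
    · intro x y
      rw [hm, hm, map_mul, map_mul, map_mul, map_mul, huv]
  haveI : Finite (Quotient s) := by
    have hsur : Function.Surjective
        (fun t : {t : T // ∃ w, β w = t} => Quotient.mk s (Classical.choose t.2)) := by
      intro q
      induction q using Quotient.inductionOn with | _ w => ?_
      refine ⟨⟨β w, ⟨w, rfl⟩⟩, ?_⟩
      exact hsound (hfactor _ _ (Classical.choose_spec (⟨w, rfl⟩ : ∃ w', β w' = β w)))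
    exact Finite.of_surjective _ hsur
  letI : Fintype (Quotient s) := Fintype.ofFinite _
  -- morphism
  let α : FreeSemigroup A →ₙ* Quotient s :=
    { toFun := fun u => Quotient.mk s u, map_mul' := fun u v => (hmulmk u v).symm }
  refine ⟨Quotient s, Qsg, inferInstance, α, Quotient.mk s '' (LangOf φ), ?_, ?_⟩
  · ext w
    simp only [Set.mem_preimage, Set.mem_image]
    constructor
    · intro hw
      exact ⟨w, hw, rfl⟩
    · rintro ⟨u, hu, he⟩
      have := Quotient.exact he
      exact (this.1).mp hu
  · -- aperiodicity
    intro q n hid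
    induction q using Quotient.inductionOn with | _ u => ?_
    have hspow_mk : ∀ m : ℕ, spow (Quotient.mk s u) m = Quotient.mk s (spow u m) := by
      intro m
      induction m with
      | zero => rfl
      | succ m ih =>
        show spow (Quotient.mk s u) m * _ = _
        rw [ih, hmulmk]
        rfl
    rw [hspow_mk] at hid ⊢
    rw [hmulmk, spow_add] at hid
    -- hid : ⟦spow u (n + n + 1)⟧ = ⟦spow u n⟧
    have hstep : ∀ a b : ℕ, 3 ^ k ≤ a + 1 → 3 ^ k ≤ b + 1 →
        Quotient.mk s (spow u a) = Quotient.mk s (spow u b) := by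
      intro a b ha hb
      exact hsound (synRel_spow_langOf φ hs u ha hb)
    have hT : 1 ≤ 3 ^ k := Nat.one_le_pow _ _ (by norm_num)
    have hiter : ∀ t : ℕ, Quotient.mk s (spow u ((n + 1) * (t + 1) - 1))
        = Quotient.mk s (spow u n) := by
      intro t
      induction t with
      | zero =>
        congr 1
        have : (n + 1) * 1 - 1 = n := by omega
        rw [this]
      | succ t ih =>
        have e : (n + 1) * (t + 1 + 1) - 1 = ((n + 1) * (t + 1) - 1) + n + 1 := by
          have h1 : 1 ≤ (n + 1) * (t + 1) := Nat.one_le_iff_ne_zero.mpr (by positivity)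
          have e2 : (n + 1) * (t + 1 + 1) = (n + 1) * (t + 1) + (n + 1) := by ring
          omega
        rw [e, ← spow_add, ← hmulmk, ih, hmulmk, spow_add]
        exact hid
    set a := (n + 1) * (3 ^ k) - 1 with hadef
    have ha1 : a + 1 = (n + 1) * 3 ^ k := by
      have : 1 ≤ (n + 1) * 3 ^ k := Nat.one_le_iff_ne_zero.mpr (by positivity)
      omega
    have haineq : 3 ^ k ≤ a + 1 := by
      rw [ha1]
      exact Nat.le_mul_of_pos_left _ (by omega)
    have h1 : Quotient.mk s (spow u n) = Quotient.mk s (spow u a) := by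
      have := hiter (3 ^ k - 1)
      rw [show 3 ^ k - 1 + 1 = 3 ^ k from by omega] at this
      exact this.symm
    calc Quotient.mk s (spow u n)
        = Quotient.mk s (spow u a) := h1
      _ = Quotient.mk s (spow u (a + 1)) := hstep a (a + 1) haineq (by omega)
      _ = Quotient.mk s (spow u a * u) := rfl
      _ = Quotient.mk s (spow u a) * Quotient.mk s u := (hmulmk _ _).symm
      _ = Quotient.mk s (spow u n) * Quotient.mk s u := by rw [← h1]

end Syntactic
/-! ### Part 4a: star-free languages of lists, aperiodic monoids, local divisors -/

section StarFree
variable {A : Type}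

/-- Concatenation of list languages. -/
def catL (P Q : Set (List A)) : Set (List A) := {w | ∃ u ∈ P, ∃ v ∈ Q, u ++ v = w}

/-- Star-free languages over `A` (as subsets of `A*`). -/
inductive SF : Set (List A) → Prop
  | univ : SF Set.univ
  | single (a : A) : SF {[a]}
  | union {P Q} : SF P → SF Q → SF (P ∪ Q)
  | compl {P} : SF P → SF Pᶜ
  | cat {P Q} : SF P → SF Q → SF (catL P Q)

theorem SF_empty : SF (∅ : Set (List A)) := by
  have := SF.compl (SF.univ (A := A))
  simpa using this

theorem SF_inter {P Q : Set (List A)} (hP : SF P) (hQ : SF Q) : SF (P ∩ Q) := by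
  have := SF.compl (SF.union (SF.compl hP) (SF.compl hQ))
  rwa [Set.compl_union, compl_compl, compl_compl] at this

theorem SF_diff {P Q : Set (List A)} (hP : SF P) (hQ : SF Q) : SF (P \ Q) := by
  have := SF_inter hP (SF.compl hQ)
  rwa [Set.diff_eq]

theorem SF_biUnion {ι : Type} [DecidableEq ι] (s : Finset ι) (f : ι → Set (List A))
    (h : ∀ i ∈ s, SF (f i)) : SF (⋃ i ∈ s, f i) := by
  classical
  induction s using Finset.induction with
  | empty => simpa using SF_empty
  | @insert a s ha ih =>
    rw [Finset.set_biUnion_insert]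
    exact SF.union (h _ (Finset.mem_insert_self _ _))
      (ih fun i hi => h i (Finset.mem_insert_of_mem hi))

theorem SF_iUnion {ι : Type} [Fintype ι] (f : ι → Set (List A))
    (h : ∀ i, SF (f i)) : SF (⋃ i, f i) := by
  classical
  have := SF_biUnion Finset.univ f (fun i _ => h i)
  simpa using this

/-- Product of the letter images along a list. -/
def hprod {M : Type} [Monoid M] (f : A → M) (w : List A) : M := (w.map f).prod

theorem hprod_nil {M : Type} [Monoid M] (f : A → M) : hprod f [] = 1 := rfl

theorem hprod_append {M : Type} [Monoid M] (f : A → M) (u v : List A) :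
    hprod f (u ++ v) = hprod f u * hprod f v := by simp [hprod]

theorem hprod_single {M : Type} [Monoid M] (f : A → M) (a : A) :
    hprod f [a] = f a := by simp [hprod]

end StarFree

section Aper

/-- Uniform aperiodicity for monoids. -/
def AperN (M : Type) [Monoid M] : Prop := ∃ N : ℕ, ∀ x : M, x ^ (N + 1) = x ^ (N + 2)

theorem aperN_all {M : Type} [Monoid M] {N : ℕ} (h : ∀ x : M, x ^ (N + 1) = x ^ (N + 2)) :
    ∀ (d : ℕ) (x : M), x ^ (N + 1 + d) = x ^ (N + 2 + d) := by
  intro d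
  induction d with
  | zero => simpa using h
  | succ d ih =>
    intro x
    have e1 : N + 1 + (d + 1) = (N + 1 + d) + 1 := by omega
    have e2 : N + 2 + (d + 1) = (N + 2 + d) + 1 := by omega
    rw [e1, e2, pow_succ, pow_succ, ih x]

theorem eq_one_of_mul_eq_one {M : Type} [Monoid M] (hap : AperN M) {x y : M}
    (h : x * y = 1) : x = 1 ∧ y = 1 := by
  obtain ⟨N, hN⟩ := hap
  have hpow : ∀ n, x ^ n * y ^ n = 1 := by
    intro n
    induction n with
    | zero => simp
    | succ n ih =>
      have : x ^ (n + 1) * y ^ (n + 1) = x ^ n * (x * y) * y ^ n := by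
        rw [pow_succ, pow_succ']
        simp [mul_assoc]
      rw [this, h, mul_one, ih]
  have hx : x = 1 := by
    have h1 : x ^ (N + 2) * y ^ (N + 1) = x := by
      have : x ^ (N + 2) = x * x ^ (N + 1) := (pow_succ' x (N + 1))
      rw [this, mul_assoc, hpow (N + 1), mul_one]
    rw [← hN] at h1
    rw [hpow (N + 1)] at h1
    exact h1.symm
  refine ⟨hx, ?_⟩
  rw [hx, one_mul] at h
  exact h

end Aper

section LocalDivisor
variable {M : Type} [Monoid M]

/-- The local divisor of `M` at `e`. -/
def LocalDiv (M : Type) [Monoid M] (e : M) : Type :=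
  {x : M // (∃ y, e * y = x) ∧ (∃ z, z * e = x)}

namespace LocalDiv

variable {e : M}

noncomputable def dmul (x y : LocalDiv M e) : LocalDiv M e := by
  refine ⟨Classical.choose x.2.2 * y.val, ?_, ?_⟩
  · obtain ⟨y₂, hy₂⟩ := y.2.1
    obtain ⟨x₂, hx₂⟩ := x.2.1
    refine ⟨x₂ * y₂, ?_⟩
    have hz := Classical.choose_spec x.2.2
    calc e * (x₂ * y₂) = (e * x₂) * y₂ := by rw [mul_assoc]
      _ = ((Classical.choose x.2.2) * e) * y₂ := by rw [hx₂, hz]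
      _ = Classical.choose x.2.2 * (e * y₂) := by rw [mul_assoc]
      _ = Classical.choose x.2.2 * y.val := by rw [hy₂]
  · obtain ⟨y₃, hy₃⟩ := y.2.2
    exact ⟨Classical.choose x.2.2 * y₃, by rw [mul_assoc, hy₃]⟩

theorem dmul_val (x y : LocalDiv M e) {z : M} (hz : z * e = x.val) :
    (dmul x y).val = z * y.val := by
  show Classical.choose x.2.2 * y.val = z * y.val
  obtain ⟨y₂, hy₂⟩ := y.2.1
  have hz0 := Classical.choose_spec x.2.2
  rw [← hy₂, ← mul_assoc, hz0, ← hz, mul_assoc]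

theorem dmul_val' (x y : LocalDiv M e) {y₂ : M} (hy : e * y₂ = y.val) :
    (dmul x y).val = x.val * y₂ := by
  have hz0 := Classical.choose_spec x.2.2
  rw [dmul_val x y hz0, ← hy, ← mul_assoc, hz0]

noncomputable instance instOne : One (LocalDiv M e) :=
  ⟨⟨e, ⟨1, mul_one e⟩, ⟨1, one_mul e⟩⟩⟩

theorem val_one' : (1 : LocalDiv M e).val = e := rfl

noncomputable instance instMonoid : Monoid (LocalDiv M e) where
  mul := dmul
  one := 1
  mul_assoc a b c := by
    apply Subtype.ext
    obtain ⟨b₂, hb₂⟩ := b.2.1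
    obtain ⟨c₂, hc₂⟩ := c.2.1
    have h1 : (dmul (dmul a b) c).val = (a.val * b₂) * c₂ := by
      rw [dmul_val' _ _ hc₂, dmul_val' _ _ hb₂]
    have h2 : (dmul a (dmul b c)).val = a.val * (b₂ * c₂) := by
      have hbc : e * (b₂ * c₂) = (dmul b c).val := by
        rw [dmul_val' _ _ hc₂, ← hb₂, mul_assoc]
      rw [dmul_val' _ _ hbc]
    show (dmul (dmul a b) c).val = (dmul a (dmul b c)).val
    rw [h1, h2, mul_assoc]
  one_mul a := by
    apply Subtype.ext
    show (dmul 1 a).val = a.val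
    rw [dmul_val (1 : LocalDiv M e) a
      (show (1 : M) * e = (1 : LocalDiv M e).val by rw [one_mul]; rfl), one_mul]
  mul_one a := by
    apply Subtype.ext
    show (dmul a 1).val = a.val
    rw [dmul_val' a (1 : LocalDiv M e)
      (show e * (1 : M) = (1 : LocalDiv M e).val by rw [mul_one]; rfl), mul_one]

theorem val_one : (1 : LocalDiv M e).val = e := rfl

theorem mul_def (x y : LocalDiv M e) : x * y = dmul x y := rfl

theorem pow_val (x : LocalDiv M e) {y₂ : M} (hy : e * y₂ = x.val) :
    ∀ k : ℕ, (x ^ (k + 1)).val = x.val * y₂ ^ k := by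
  intro k
  induction k with
  | zero => simp
  | succ k ih =>
    have : x ^ (k + 2) = x ^ (k + 1) * x := by rw [pow_succ]
    rw [this, mul_def, dmul_val' _ _ hy, ih, mul_assoc, ← pow_succ]

theorem aperN (hap : AperN M) : AperN (LocalDiv M e) := by
  obtain ⟨N, hN⟩ := hap
  refine ⟨N + 1, ?_⟩
  intro x
  obtain ⟨y₂, hy₂⟩ := x.2.1
  apply Subtype.ext
  show (x ^ (N + 1 + 1)).val = (x ^ (N + 1 + 2)).val
  have h1 := pow_val x hy₂ (N + 1)
  have h2 := pow_val x hy₂ (N + 2)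
  have e2 : N + 1 + 2 = (N + 2) + 1 := by omega
  rw [e2, h2, h1, hN y₂]

end LocalDiv

end LocalDivisor

section Blocks
variable {A : Type}

/-- Join a block sequence, appending the separator `c` after every block. -/
def Jn (c : A) (us : List (List A)) : List A := (us.map (fun u => u ++ [c])).flatten

theorem Jn_nil (c : A) : Jn c [] = [] := rfl

theorem Jn_cons (c : A) (u : List A) (us : List (List A)) :
    Jn c (u :: us) = (u ++ [c]) ++ Jn c us := by simp [Jn]

theorem Jn_append (c : A) (us vs : List (List A)) :
    Jn c (us ++ vs) = Jn c us ++ Jn c vs := by simp [Jn]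

theorem first_c_cancel (c : A) : ∀ {u u' t t' : List A}, c ∉ u → c ∉ u' →
    u ++ c :: t = u' ++ c :: t' → u = u' ∧ t = t' := by
  intro u
  induction u with
  | nil =>
    intro u' t t' _ hu' h
    rcases u' with _ | ⟨b, u''⟩
    · simp at h
      exact ⟨rfl, h⟩
    · simp only [List.nil_append, List.cons_append, List.cons.injEq] at h
      exfalso
      apply hu'
      rw [← h.1]
      exact List.mem_cons_self
  | cons a u ih =>
    intro u' t t' hu hu' h
    rcases u' with _ | ⟨b, u''⟩
    · simp only [List.cons_append, List.nil_append, List.cons.injEq] at h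
      exfalso
      apply hu
      rw [h.1]
      exact List.mem_cons_self
    · simp only [List.cons_append, List.cons.injEq] at h
      obtain ⟨rfl, h2⟩ := h
      have := ih (fun hc => hu (List.mem_cons_of_mem _ hc))
        (fun hc => hu' (List.mem_cons_of_mem _ hc)) h2
      exact ⟨by rw [this.1], this.2⟩

theorem Jn_inj (c : A) : ∀ {us vs : List (List A)}, (∀ u ∈ us, c ∉ u) →
    (∀ v ∈ vs, c ∉ v) → Jn c us = Jn c vs → us = vs := by
  intro us
  induction us with
  | nil =>
    intro vs _ _ h
    rcases vs with _ | ⟨v, vs⟩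
    · rfl
    · rw [Jn_nil, Jn_cons] at h
      exfalso
      have := congrArg List.length h
      simp at this
  | cons u us ih =>
    intro vs hus hvs h
    rcases vs with _ | ⟨v, vs⟩
    · rw [Jn_nil, Jn_cons] at h
      exfalso
      have := congrArg List.length h
      simp at this
    · rw [Jn_cons, Jn_cons] at h
      rw [List.append_assoc, List.append_assoc] at h
      simp only [List.singleton_append] at h
      obtain ⟨h1, h2⟩ := first_c_cancel c (hus u (List.mem_cons_self))
        (hvs v (List.mem_cons_self)) h
      rw [h1, ih (fun x hx => hus x (List.mem_cons_of_mem _ hx))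
        (fun x hx => hvs x (List.mem_cons_of_mem _ hx)) h2]

theorem exists_first_c (c : A) : ∀ {w : List A}, c ∈ w →
    ∃ u t, c ∉ u ∧ w = u ++ c :: t := by
  intro w
  induction w with
  | nil => intro h; simp at h
  | cons a w ih =>
    intro h
    by_cases hac : a = c
    · subst hac
      exact ⟨[], w, by simp, rfl⟩
    · have : c ∈ w := by
        rcases List.mem_cons.mp h with h' | h'
        · exact absurd h'.symm hac
        · exact h'
      obtain ⟨u, t, hu, he⟩ := ih this
      refine ⟨a :: u, t, ?_, by rw [he]; rfl⟩
      intro hc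
      rcases List.mem_cons.mp hc with h' | h'
      · exact hac h'.symm
      · exact hu h'

theorem exists_blocks_aux (c : A) : ∀ (n : ℕ) (y : List A), y.length ≤ n →
    (y = [] ∨ ∃ y', y = y' ++ [c]) →
    ∃ us, (∀ u ∈ us, c ∉ u) ∧ Jn c us = y := by
  intro n
  induction n with
  | zero =>
    intro y hlen hy
    rcases hy with rfl | ⟨y', rfl⟩
    · exact ⟨[], by simp, rfl⟩
    · simp at hlen
  | succ n ih =>
    intro y hlen hy
    rcases hy with rfl | ⟨y', rfl⟩
    · exact ⟨[], by simp, rfl⟩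
    · have hc : c ∈ y' ++ [c] := by simp
      obtain ⟨u, t, hu, he⟩ := exists_first_c c hc
      have htlen : t.length ≤ n := by
        have := congrArg List.length he
        simp at this hlen
        omega
      have htshape : t = [] ∨ ∃ t', t = t' ++ [c] := by
        rcases List.eq_nil_or_concat t with rfl | ⟨t', b, rfl⟩
        · exact Or.inl rfl
        · right
          refine ⟨t', ?_⟩
          have : y' ++ [c] = (u ++ c :: t') ++ [b] := by
            rw [he]
            simp
          have hb : b = c := by
            have h1 := congrArg List.getLast? this
            rw [List.getLast?_concat, List.getLast?_concat] at h1
            exact (Option.some_inj.mp h1).symm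
          rw [hb]
          exact List.concat_eq_append
      obtain ⟨us, hus, hjn⟩ := ih t htlen htshape
      refine ⟨u :: us, ?_, ?_⟩
      · intro x hx
        rcases List.mem_cons.mp hx with rfl | hx
        · exact hu
        · exact hus x hx
      · rw [Jn_cons, hjn, he]
        simp

end Blocks
/-! ### Part 4b: subalphabet transfer and substitution transfer -/

section Transfer
variable {A : Type}

def NocL (c : A) : Set (List A) := {w | c ∉ w}

theorem mem_c_iff (c : A) (w : List A) :
    (c ∈ w) ↔ w ∈ catL (catL Set.univ {[c]}) (Set.univ : Set (List A)) := by
  constructor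
  · intro h
    obtain ⟨s, t, rfl⟩ := List.append_of_mem h
    exact ⟨s ++ [c], ⟨s, trivial, [c], rfl, rfl⟩, t, trivial, by simp⟩
  · rintro ⟨u', ⟨u, -, v, hv, rfl⟩, v', -, rfl⟩
    rw [Set.mem_singleton_iff] at hv
    subst hv
    simp

theorem SF_NocL (c : A) : SF (NocL c) := by
  have h : NocL c = (catL (catL Set.univ {[c]}) Set.univ)ᶜ := by
    ext w
    simp only [NocL, Set.mem_setOf_eq, Set.mem_compl_iff]
    rw [← mem_c_iff]
  rw [h]
  exact SF.compl (SF.cat (SF.cat SF.univ (SF.single c)) SF.univ)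

theorem noc_iff_range (c : A) (w : List A) :
    c ∉ w ↔ ∃ u : List {a : A // a ≠ c}, w = u.map Subtype.val := by
  constructor
  · intro h
    induction w with
    | nil => exact ⟨[], rfl⟩
    | cons a w ih =>
      obtain ⟨u, hu⟩ := ih (fun hc => h (List.mem_cons_of_mem _ hc))
      refine ⟨⟨a, fun hc => h (by rw [hc]; exact List.mem_cons_self)⟩ :: u, ?_⟩
      simp [hu]
  · rintro ⟨u, rfl⟩
    intro hc
    obtain ⟨⟨a, ha⟩, _, he⟩ := List.mem_map.mp hc
    exact ha he

theorem mapval_injective (c : A) :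
    Function.Injective (List.map (Subtype.val : {a : A // a ≠ c} → A)) :=
  List.map_injective_iff.mpr Subtype.val_injective

theorem SF_image_val (c : A) {K : Set (List {a : A // a ≠ c})} (h : SF K) :
    SF ((fun u : List {a : A // a ≠ c} => u.map Subtype.val) '' K) := by
  induction h with
  | univ =>
    have he : (fun u : List {a : A // a ≠ c} => u.map Subtype.val) '' Set.univ
        = NocL c := by
      ext w
      simp only [Set.image_univ, Set.mem_range, NocL, Set.mem_setOf_eq]
      rw [noc_iff_range]
      constructor
      · rintro ⟨u, hu⟩; exact ⟨u, hu.symm⟩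
      · rintro ⟨u, hu⟩; exact ⟨u, hu.symm⟩
    rw [he]
    exact SF_NocL c
  | single b =>
    have he : (fun u : List {a : A // a ≠ c} => u.map Subtype.val) '' {[b]}
        = {[(b : A)]} := by
      rw [Set.image_singleton]
      rfl
    rw [he]
    exact SF.single _
  | union h1 h2 ih1 ih2 =>
    rw [Set.image_union]
    exact SF.union ih1 ih2
  | @compl P h ih =>
    have he : (fun u : List {a : A // a ≠ c} => u.map Subtype.val) '' Pᶜ
        = NocL c \ ((fun u : List {a : A // a ≠ c} => u.map Subtype.val) '' P) := by
      ext w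
      constructor
      · rintro ⟨u, hu, rfl⟩
        refine ⟨(noc_iff_range c _).mpr ⟨u, rfl⟩, ?_⟩
        rintro ⟨u', hu', he⟩
        exact hu ((mapval_injective c he) ▸ hu')
      · rintro ⟨hnoc, hnot⟩
        obtain ⟨u, rfl⟩ := (noc_iff_range c w).mp hnoc
        exact ⟨u, fun hP => hnot ⟨u, hP, rfl⟩, rfl⟩
    rw [he]
    exact SF_diff (SF_NocL c) ih
  | @cat P Q h1 h2 ih1 ih2 =>
    have he : (fun u : List {a : A // a ≠ c} => u.map Subtype.val) '' (catL P Q)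
        = catL ((fun u : List {a : A // a ≠ c} => u.map Subtype.val) '' P)
            ((fun u : List {a : A // a ≠ c} => u.map Subtype.val) '' Q) := by
      ext w
      constructor
      · rintro ⟨y, ⟨u, hu, v, hv, rfl⟩, rfl⟩
        exact ⟨u.map Subtype.val, ⟨u, hu, rfl⟩, v.map Subtype.val, ⟨v, hv, rfl⟩,
          List.map_append.symm⟩
      · rintro ⟨u', ⟨u, hu, rfl⟩, v', ⟨v, hv, rfl⟩, rfl⟩
        exact ⟨u ++ v, ⟨u, hu, v, hv, rfl⟩, List.map_append⟩
    rw [he]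
    exact SF.cat ih1 ih2

theorem SF_noc_hprod {M : Type} [Monoid M] (f : A → M) (c : A)
    (hB : ∀ t : M, SF {u : List {a : A // a ≠ c} | hprod (fun b => f b.val) u = t})
    (t : M) : SF {w : List A | c ∉ w ∧ hprod f w = t} := by
  have he : {w : List A | c ∉ w ∧ hprod f w = t}
      = (fun u : List {a : A // a ≠ c} => u.map Subtype.val) ''
        {u | hprod (fun b => f b.val) u = t} := by
    ext w
    constructor
    · rintro ⟨hnoc, hval⟩
      obtain ⟨u, rfl⟩ := (noc_iff_range c w).mp hnoc
      refine ⟨u, ?_, rfl⟩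
      simpa [hprod, List.map_map] using hval
    · rintro ⟨u, hu, rfl⟩
      refine ⟨(noc_iff_range c _).mpr ⟨u, rfl⟩, ?_⟩
      simpa [hprod, List.map_map] using hu
  rw [he]
  exact SF_image_val c (hB t)

/-- The canonical generator map into the local divisor. -/
def gD {M : Type} [Monoid M] (e : M) (t : M) : LocalDiv M e :=
  ⟨e * t * e, ⟨t * e, (mul_assoc e t e).symm⟩, ⟨e * t, rfl⟩⟩

theorem val_prod_blocks {M : Type} [Monoid M] (f : A → M) (c : A) :
    ∀ us : List (List A),
    (((us.map (fun u => gD (f c) (hprod f u))).prod).val : M)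
      = f c * hprod f (Jn c us) := by
  intro us
  induction us with
  | nil =>
    show (1 : LocalDiv M (f c)).val = f c * hprod f (Jn c [])
    rw [Jn_nil, hprod_nil, mul_one]
    rfl
  | cons u us ih =>
    rw [List.map_cons, List.prod_cons, LocalDiv.mul_def,
      LocalDiv.dmul_val' _ _ (show f c * hprod f (Jn c us) = _ from ih.symm)]
    show (f c * hprod f u * f c) * hprod f (Jn c us) = _
    rw [Jn_cons, hprod_append, hprod_append, hprod_single]
    simp [mul_assoc]

def substL {M : Type} [Monoid M] (f : A → M) (c : A) (K : Set (List M)) :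
    Set (List A) :=
  {y | ∃ us : List (List A), (∀ u ∈ us, c ∉ u) ∧ Jn c us = y ∧ us.map (hprod f) ∈ K}

def BlocksSet (c : A) : Set (List A) := {y | y = [] ∨ ∃ y', y = y' ++ [c]}

theorem SF_singleton_nil [Fintype A] : SF ({[]} : Set (List A)) := by
  classical
  have he : ({[]} : Set (List A)) = (⋃ a : A, catL {[a]} Set.univ)ᶜ := by
    ext w
    rcases w with _ | ⟨a, t⟩
    · simp only [Set.mem_singleton_iff, Set.mem_compl_iff, Set.mem_iUnion]
      constructor
      · rintro - ⟨b, ⟨u, hu, v, -, he⟩⟩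
        rw [Set.mem_singleton_iff] at hu
        subst hu
        simp at he
      · intro _; trivial
    · simp only [Set.mem_singleton_iff, Set.mem_compl_iff, Set.mem_iUnion]
      constructor
      · intro h; simp at h
      · intro h
        exfalso
        exact h ⟨a, ⟨[a], rfl, t, trivial, rfl⟩⟩
  rw [he]
  exact SF.compl (SF_iUnion _ (fun a => SF.cat (SF.single a) SF.univ))

theorem SF_blocksSet [Fintype A] (c : A) : SF (BlocksSet c) := by
  have he : BlocksSet c = {[]} ∪ catL Set.univ {[c]} := by
    ext w
    simp only [BlocksSet, Set.mem_setOf_eq, Set.mem_union, Set.mem_singleton_iff]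
    constructor
    · rintro (rfl | ⟨y', rfl⟩)
      · exact Or.inl rfl
      · exact Or.inr ⟨y', trivial, [c], rfl, rfl⟩
    · rintro (rfl | ⟨u, -, v, hv, rfl⟩)
      · exact Or.inl rfl
      · rw [Set.mem_singleton_iff] at hv
        subst hv
        exact Or.inr ⟨u, rfl⟩
  rw [he]
  exact SF.union SF_singleton_nil (SF.cat SF.univ (SF.single c))

theorem Jn_shape (c : A) : ∀ us : List (List A), Jn c us ∈ BlocksSet c := by
  intro us
  induction us with
  | nil => exact Or.inl rfl
  | cons u us ih =>
    rcases ih with h | ⟨y', hy'⟩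
    · right
      rw [Jn_cons, h, List.append_nil]
      exact ⟨u, rfl⟩
    · right
      rw [Jn_cons, hy']
      exact ⟨u ++ [c] ++ y', by simp⟩

theorem exists_blocks_of_blocksSet (c : A) {y : List A} (hy : y ∈ BlocksSet c) :
    ∃ us, (∀ u ∈ us, c ∉ u) ∧ Jn c us = y :=
  exists_blocks_aux c y.length y le_rfl hy

theorem SF_substL {M : Type} [Monoid M] [Fintype A] (f : A → M) (c : A)
    (hL : ∀ t : M, SF {w : List A | c ∉ w ∧ hprod f w = t}) :
    ∀ {K : Set (List M)}, SF K → SF (substL f c K) := by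
  intro K h
  induction h with
  | univ =>
    have he : substL f c Set.univ = BlocksSet c := by
      ext y
      constructor
      · rintro ⟨us, hus, rfl, -⟩
        exact Jn_shape c us
      · intro hy
        obtain ⟨us, hus, hj⟩ := exists_blocks_of_blocksSet c hy
        exact ⟨us, hus, hj, trivial⟩
    rw [he]
    exact SF_blocksSet c
  | single t =>
    have he : substL f c {[t]} = catL {w | c ∉ w ∧ hprod f w = t} {[c]} := by
      ext y
      constructor
      · rintro ⟨us, hus, rfl, hmem⟩
        rw [Set.mem_singleton_iff] at hmem
        rcases us with _ | ⟨u, us⟩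
        · simp at hmem
        · rcases us with _ | ⟨u', us⟩
          · simp only [List.map_cons, List.map_nil, List.cons.injEq, and_true] at hmem
            refine ⟨u, ⟨hus u (List.mem_cons_self), hmem⟩, [c], rfl, ?_⟩
            rw [Jn_cons, Jn_nil, List.append_nil]
          · simp at hmem
      · rintro ⟨u, ⟨hnoc, hval⟩, v, hv, rfl⟩
        rw [Set.mem_singleton_iff] at hv
        subst hv
        refine ⟨[u], ?_, ?_, ?_⟩
        · intro x hx
          rcases List.mem_cons.mp hx with rfl | hx
          · exact hnoc
          · simp at hx
        · rw [Jn_cons, Jn_nil, List.append_nil]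
        · simp [hval]
    rw [he]
    exact SF.cat (hL t) (SF.single c)
  | @union P Q h1 h2 ih1 ih2 =>
    have he : substL f c (P ∪ Q) = substL f c P ∪ substL f c Q := by
      ext y
      constructor
      · rintro ⟨us, hus, rfl, hmem⟩
        rcases hmem with hm | hm
        · exact Or.inl ⟨us, hus, rfl, hm⟩
        · exact Or.inr ⟨us, hus, rfl, hm⟩
      · rintro (⟨us, hus, rfl, hm⟩ | ⟨us, hus, rfl, hm⟩)
        · exact ⟨us, hus, rfl, Or.inl hm⟩
        · exact ⟨us, hus, rfl, Or.inr hm⟩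
    rw [he]
    exact SF.union ih1 ih2
  | @compl P h ih =>
    have he : substL f c Pᶜ = BlocksSet c \ substL f c P := by
      ext y
      constructor
      · rintro ⟨us, hus, rfl, hmem⟩
        refine ⟨Jn_shape c us, ?_⟩
        rintro ⟨vs, hvs, hj, hm⟩
        rw [Jn_inj c hvs hus hj] at hm
        exact hmem hm
      · rintro ⟨hy, hnot⟩
        obtain ⟨us, hus, hj⟩ := exists_blocks_of_blocksSet c hy
        refine ⟨us, hus, hj, ?_⟩
        intro hm
        exact hnot ⟨us, hus, hj, hm⟩
    rw [he]
    exact SF_diff (SF_blocksSet c) ih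
  | @cat P Q h1 h2 ih1 ih2 =>
    have he : substL f c (catL P Q) = catL (substL f c P) (substL f c Q) := by
      ext y
      constructor
      · rintro ⟨us, hus, rfl, ⟨s1, hs1, s2, hs2, hs⟩⟩
        refine ⟨Jn c (us.take s1.length), ⟨us.take s1.length,
          fun u hu => hus u (List.mem_of_mem_take hu), rfl, ?_⟩,
          Jn c (us.drop s1.length), ⟨us.drop s1.length,
          fun u hu => hus u (List.mem_of_mem_drop hu), rfl, ?_⟩, ?_⟩
        · rw [List.map_take, ← hs, List.take_left]
          exact hs1
        · rw [List.map_drop, ← hs, List.drop_left]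
          exact hs2
        · rw [← Jn_append, List.take_append_drop]
      · rintro ⟨y1, ⟨us1, hus1, rfl, hm1⟩, y2, ⟨us2, hus2, rfl, hm2⟩, rfl⟩
        refine ⟨us1 ++ us2, ?_, (Jn_append c us1 us2), ?_⟩
        · intro u hu
          rcases List.mem_append.mp hu with h' | h'
          · exact hus1 u h'
          · exact hus2 u h'
        · rw [List.map_append]
          exact ⟨_, hm1, _, hm2, rfl⟩
    rw [he]
    exact SF.cat ih1 ih2

end Transfer
/-! ### Part 4c: aperiodic monoids recognize only star-free languages -/

section MainSF
variable {A : Type}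

theorem hprod_cons {M : Type} [Monoid M] (f : A → M) (a : A) (w : List A) :
    hprod f (a :: w) = f a * hprod f w := by simp [hprod]

theorem exists_last_c (c : A) : ∀ {t : List A}, c ∈ t →
    ∃ y u, c ∉ u ∧ t = y ++ c :: u := by
  intro t
  induction t with
  | nil => intro h; simp at h
  | cons a t ih =>
    intro h
    by_cases hct : c ∈ t
    · obtain ⟨y, u, hu, he⟩ := ih hct
      exact ⟨a :: y, u, hu, by rw [he]; rfl⟩
    · have hac : a = c := by
        rcases List.mem_cons.mp h with h' | h'
        · exact h'.symm
        · exact absurd h' hct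
      subst hac
      exact ⟨[], t, hct, rfl⟩

theorem SF_iUnion_cond {ι : Type} [Fintype ι] (p : ι → Prop) (f : ι → Set (List A))
    (h : ∀ i, p i → SF (f i)) : SF (⋃ i, ⋃ (_ : p i), f i) := by
  classical
  have he : (⋃ i, ⋃ (_ : p i), f i) = ⋃ i, (if p i then f i else ∅) := by
    ext w
    simp only [Set.mem_iUnion]
    constructor
    · rintro ⟨i, hpi, hw⟩
      exact ⟨i, by rw [if_pos hpi]; exact hw⟩
    · rintro ⟨i, hw⟩
      by_cases hpi : p i
      · rw [if_pos hpi] at hw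
        exact ⟨i, hpi, hw⟩
      · rw [if_neg hpi] at hw
        simp at hw
  rw [he]
  refine SF_iUnion _ ?_
  intro i
  by_cases hpi : p i
  · rw [if_pos hpi]; exact h i hpi
  · rw [if_neg hpi]; exact SF_empty

theorem aperiodic_to_SF :
    ∀ (cM : ℕ) {M : Type} [Monoid M] [Fintype M], AperN M → Fintype.card M ≤ cM →
      ∀ (cA : ℕ) {A' : Type} [Fintype A'], Fintype.card A' ≤ cA →
      ∀ (f : A' → M) (m : M), SF {w : List A' | hprod f w = m} := by
  intro cM
  induction cM using Nat.strong_induction_on with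
  | _ cM IH1 =>
  intro M iM fM hap hcM cA
  induction cA using Nat.strong_induction_on with
  | _ cA IH2 =>
  intro A' iA hcA f m
  classical
  by_cases hex : ∃ c : A', f c ≠ 1
  · obtain ⟨c, hc⟩ := hex
    -- subalphabet
    haveI : Fintype {a : A' // a ≠ c} := Fintype.ofFinite _
    have hcardB : Fintype.card {a : A' // a ≠ c} < cA := by
      have h1 : Fintype.card {a : A' // a ≠ c} < Fintype.card A' := by
        apply Fintype.card_lt_of_injective_of_notMem Subtype.val Subtype.val_injective
          (b := c)
        rintro ⟨⟨a, ha⟩, h⟩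
        exact ha h
      omega
    have hB : ∀ t : M, SF {u : List {a : A' // a ≠ c} | hprod (fun b => f b.val) u = t} :=
      fun t => IH2 (Fintype.card {a : A' // a ≠ c}) hcardB le_rfl (fun b => f b.val) t
    have hnoceq : ∀ t : M, SF {w : List A' | c ∉ w ∧ hprod f w = t} :=
      fun t => SF_noc_hprod f c hB t
    -- local divisor
    haveI : Finite (LocalDiv M (f c)) := Subtype.finite
    haveI : Fintype (LocalDiv M (f c)) := Fintype.ofFinite _
    have hone : (1 : M) ∉ Set.range (fun x : LocalDiv M (f c) => x.val) := by
      rintro ⟨x, hx⟩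
      have hx' : x.val = 1 := hx
      obtain ⟨y, hy⟩ := x.2.1
      rw [hx'] at hy
      exact hc ((eq_one_of_mul_eq_one hap hy).1)
    have hcardD : Fintype.card (LocalDiv M (f c)) < cM := by
      have h1 := Fintype.card_lt_of_injective_of_notMem
        (fun x : LocalDiv M (f c) => x.val) (fun x y h => Subtype.ext h) hone
      omega
    have hapD : AperN (LocalDiv M (f c)) := LocalDiv.aperN hap
    have hD : ∀ x : LocalDiv M (f c), SF {s : List M | hprod (gD (f c)) s = x} :=
      fun x => IH1 (Fintype.card (LocalDiv M (f c))) hcardD hapD le_rfl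
        (Fintype.card M) le_rfl (gD (f c)) x
    have hMid : ∀ x : LocalDiv M (f c), SF (substL f c {s : List M | hprod (gD (f c)) s = x}) :=
      fun x => SF_substL f c hnoceq (hD x)
    -- value of a block word
    have hval : ∀ us : List (List A'),
        (hprod (gD (f c)) (us.map (hprod f))).val = f c * hprod f (Jn c us) := by
      intro us
      rw [show hprod (gD (f c)) (us.map (hprod f))
          = ((us.map (fun u => gD (f c) (hprod f u))).prod) from by
        simp [hprod, List.map_map]; rfl]
      exact val_prod_blocks f c us
    -- main decomposition
    have key : {w : List A' | hprod f w = m} =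
        {w : List A' | c ∉ w ∧ hprod f w = m} ∪
        ⋃ (tr : M × LocalDiv M (f c) × M),
          ⋃ (_ : tr.1 * (tr.2.1).val * tr.2.2 = m),
          catL (catL (catL {w : List A' | c ∉ w ∧ hprod f w = tr.1} {[c]})
              (substL f c {s : List M | hprod (gD (f c)) s = tr.2.1}))
            {w : List A' | c ∉ w ∧ hprod f w = tr.2.2} := by
      ext w
      simp only [Set.mem_setOf_eq, Set.mem_union, Set.mem_iUnion]
      constructor
      · intro hw
        by_cases hcw : c ∈ w
        · right
          obtain ⟨u₀, t, hu₀, rfl⟩ := exists_first_c c hcw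
          by_cases hct : c ∈ t
          · obtain ⟨y', uk, huk, rfl⟩ := exists_last_c c hct
            have hblk : (y' ++ [c]) ∈ BlocksSet c := Or.inr ⟨y', rfl⟩
            obtain ⟨us, hus, hjn⟩ := exists_blocks_of_blocksSet c hblk
            refine ⟨(hprod f u₀, hprod (gD (f c)) (us.map (hprod f)), hprod f uk),
              ?_, ?_⟩
            · rw [hval, hjn]
              rw [← hw]
              simp [hprod_append, hprod_cons, hprod_nil, mul_assoc]
            · refine ⟨(u₀ ++ [c]) ++ (y' ++ [c]),
                ⟨u₀ ++ [c], ⟨u₀, ⟨hu₀, rfl⟩, [c], rfl, rfl⟩,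
                 y' ++ [c], ⟨us, hus, hjn, rfl⟩, rfl⟩,
                uk, ⟨huk, rfl⟩, ?_⟩
              simp
          · refine ⟨(hprod f u₀, 1, hprod f t), ?_, ?_⟩
            · rw [LocalDiv.val_one']
              rw [← hw]
              simp [hprod_append, hprod_cons, mul_assoc]
            · refine ⟨(u₀ ++ [c]) ++ [],
                ⟨u₀ ++ [c], ⟨u₀, ⟨hu₀, rfl⟩, [c], rfl, rfl⟩,
                 [], ⟨[], by simp, rfl, rfl⟩, rfl⟩,
                t, ⟨hct, rfl⟩, ?_⟩
              simp
        · exact Or.inl ⟨hcw, hw⟩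
      · rintro (⟨-, hw⟩ | ⟨tr, htr, hmem⟩)
        · exact hw
        · obtain ⟨z, ⟨z', ⟨u₀, ⟨hu₀, hv₀⟩, cc, hcc, rfl⟩, y, ⟨us, hus, hjn, hK⟩, rfl⟩,
            uk, ⟨huk, hvk⟩, rfl⟩ := hmem
          rw [Set.mem_singleton_iff] at hcc
          subst hcc
          rw [Set.mem_setOf_eq] at hK
          have hyval : f c * hprod f y = (tr.2.1).val := by
            rw [← hjn, ← hval, hK]
          rw [← htr, ← hv₀, ← hvk, ← hyval]
          simp [hprod_append, hprod_single, hprod_cons, mul_assoc]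
    rw [key]
    refine SF.union (hnoceq m) (SF_iUnion_cond _ _ ?_)
    intro tr _
    exact SF.cat (SF.cat (SF.cat (hnoceq tr.1) (SF.single c)) (hMid tr.2.1))
      (hnoceq tr.2.2)
  · push_neg at hex
    have hall : ∀ w : List A', hprod f w = 1 := by
      intro w
      induction w with
      | nil => rfl
      | cons a w ih => rw [hprod_cons, hex a, one_mul, ih]
    by_cases hm : m = 1
    · have he : {w : List A' | hprod f w = m} = Set.univ := by
        ext w
        simp [hall, hm]
    
      rw [he]
      exact SF.univ
    · have he : {w : List A' | hprod f w = m} = ∅ := by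
        ext w
        simp only [Set.mem_setOf_eq, Set.mem_empty_iff_false, iff_false]
        rw [hall]
        exact fun hc => hm hc.symm
      rw [he]
      exact SF_empty

end MainSF
/-! ### Part 5: star-free ⇒ FO-definable; semigroup conversions -/

section SFtoFO
variable {A : Type}

theorem SF_to_FO {K : Set (List A)} (h : SF K) :
    FODefinable {w : FreeSemigroup A | wordList w ∈ K} := by
  induction h with
  | univ =>
    have he : {w : FreeSemigroup A | wordList w ∈ Set.univ} = Set.univ := by
      ext w; simp
    rw [he]
    exact fod_univ
  | single a =>
    have he : {w : FreeSemigroup A | wordList w ∈ ({[a]} : Set (List A))}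
        = {w : FreeSemigroup A | wordList w = [a]} := by
      ext w; simp
    rw [he]
    exact fod_single a
  | @union P Q h1 h2 ih1 ih2 =>
    have he : {w : FreeSemigroup A | wordList w ∈ P ∪ Q}
        = {w : FreeSemigroup A | wordList w ∈ P} ∪ {w : FreeSemigroup A | wordList w ∈ Q} := by
      ext w; simp [Set.mem_union]
    rw [he]
    exact fod_union ih1 ih2
  | @compl P h ih =>
    have he : {w : FreeSemigroup A | wordList w ∈ Pᶜ}
        = {w : FreeSemigroup A | wordList w ∈ P}ᶜ := by
      ext w; simp
    rw [he]
    exact fod_compl ih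
  | @cat P Q h1 h2 ih1 ih2 =>
    classical
    have he : {w : FreeSemigroup A | wordList w ∈ catL P Q} =
        ({w : FreeSemigroup A | wordList w ∈ P} * {w : FreeSemigroup A | wordList w ∈ Q}) ∪
        {w : FreeSemigroup A | [] ∈ P ∧ wordList w ∈ Q} ∪
        {w : FreeSemigroup A | [] ∈ Q ∧ wordList w ∈ P} := by
      ext w
      simp only [Set.mem_setOf_eq, Set.mem_union]
      constructor
      · rintro ⟨u, hu, v, hv, happ⟩
        rcases eq_or_ne u [] with rfl | hune
        · rw [List.nil_append] at happ
          exact Or.inl (Or.inr ⟨hu, happ ▸ hv⟩)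
        · rcases eq_or_ne v [] with rfl | hvne
          · rw [List.append_nil] at happ
            exact Or.inr ⟨hv, happ ▸ hu⟩
          · obtain ⟨w₁, w₂, hw₁, hw₂, rfl⟩ :=
              exists_words_of_append hune hvne happ.symm
            left; left
            rw [Set.mem_mul]
            exact ⟨w₁, by rw [Set.mem_setOf_eq, hw₁]; exact hu,
              w₂, by rw [Set.mem_setOf_eq, hw₂]; exact hv, rfl⟩
      · rintro ((hm | ⟨hP, hQ⟩) | ⟨hQ, hP⟩)
        · rw [Set.mem_mul] at hm
          obtain ⟨w₁, h₁, w₂, h₂, rfl⟩ := hm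
          exact ⟨wordList w₁, h₁, wordList w₂, h₂, (wordList_mul w₁ w₂).symm⟩
        · exact ⟨[], hP, wordList w, hQ, List.nil_append _⟩
        · exact ⟨wordList w, hP, [], hQ, List.append_nil _⟩
    rw [he]
    refine fod_union (fod_union (fod_mul ih1 ih2) ?_) ?_
    · by_cases hP : [] ∈ P
      · have h' : {w : FreeSemigroup A | [] ∈ P ∧ wordList w ∈ Q}
            = {w : FreeSemigroup A | wordList w ∈ Q} := by
          ext w; simp [hP]
        rw [h']; exact ih2
      · have h' : {w : FreeSemigroup A | [] ∈ P ∧ wordList w ∈ Q} = ∅ := by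
          ext w; simp [hP]
        rw [h']; exact fod_empty
    · by_cases hQ : [] ∈ Q
      · have h' : {w : FreeSemigroup A | [] ∈ Q ∧ wordList w ∈ P}
            = {w : FreeSemigroup A | wordList w ∈ P} := by
          ext w; simp [hQ]
        rw [h']; exact ih1
      · have h' : {w : FreeSemigroup A | [] ∈ Q ∧ wordList w ∈ P} = ∅ := by
          ext w; simp [hQ]
        rw [h']; exact fod_empty

end SFtoFO

section SemigroupConv

theorem idem_of_period {S : Type} [Semigroup S] (s : S) {i d : ℕ} (hd : 1 ≤ d)
    (hper : spow s i = spow s (i + d)) :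
    spow s (d * (i + 1) - 1) * spow s (d * (i + 1) - 1) = spow s (d * (i + 1) - 1) := by
  have hstep : ∀ t, spow s (i + t) = spow s (i + t + d) := by
    intro t
    induction t with
    | zero => simpa using hper
    | succ t ih =>
      rw [show i + (t + 1) = (i + t) + 1 from by omega]
      rw [show i + t + 1 + d = (i + t + d) + 1 from by omega]
      show spow s (i + t) * s = spow s (i + t + d) * s
      rw [ih]
  have hmany : ∀ T t, spow s (i + t) = spow s (i + t + T * d) := by
    intro T
    induction T with
    | zero => simp
    | succ T ih =>
      intro t
      have e1 : i + t + (T + 1) * d = (i + (t + T * d)) + d := by ring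
      rw [e1]
      have h1 := hstep (t + T * d)
      rw [show i + (t + T * d) + d = (i + (t + T * d)) + d from by omega] at h1
      rw [← h1, show i + (t + T * d) = i + t + T * d from by omega]
      exact ih t
  have hmul : 1 ≤ d * (i + 1) := Nat.one_le_iff_ne_zero.mpr (by positivity)
  have hcm : d * (i + 1) = (i + 1) * d := Nat.mul_comm _ _
  have hei : i ≤ d * (i + 1) - 1 := by
    have h1 : i + 1 ≤ d * (i + 1) := Nat.le_mul_of_pos_left _ hd
    omega
  rw [spow_add]
  have h3 := hmany (i + 1) (d * (i + 1) - 1 - i)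
  rw [show i + (d * (i + 1) - 1 - i) = d * (i + 1) - 1 from by omega] at h3
  rw [show d * (i + 1) - 1 + (d * (i + 1) - 1) + 1
      = d * (i + 1) - 1 + (i + 1) * d from by omega]
  exact h3.symm

theorem exists_idem_pow {S : Type} [Semigroup S] [Fintype S] (s : S) :
    ∃ e ≤ (Fintype.card S + 1) * (Fintype.card S + 1),
      spow s e * spow s e = spow s e := by
  classical
  have hcard : Fintype.card S < Fintype.card (Fin (Fintype.card S + 1)) := by simp
  obtain ⟨i, j, hne, hij⟩ := Fintype.exists_ne_map_eq_of_card_lt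
    (fun i : Fin (Fintype.card S + 1) => spow s (i : ℕ)) hcard
  have hbound : ∀ a b : Fin (Fintype.card S + 1), (a : ℕ) < (b : ℕ) →
      spow s (a : ℕ) = spow s (b : ℕ) →
      ∃ e ≤ (Fintype.card S + 1) * (Fintype.card S + 1),
        spow s e * spow s e = spow s e := by
    intro a b hlt heq
    set d := (b : ℕ) - (a : ℕ) with hd
    have hd1 : 1 ≤ d := by omega
    have hper : spow s (a : ℕ) = spow s ((a : ℕ) + d) := by
      rw [show (a : ℕ) + d = (b : ℕ) from by omega]
      exact heq
    refine ⟨d * ((a : ℕ) + 1) - 1, ?_, idem_of_period s hd1 hper⟩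
    have h1 : d ≤ Fintype.card S + 1 := by omega
    have h2 : (a : ℕ) + 1 ≤ Fintype.card S + 1 := by
      have := a.isLt
      omega
    have := Nat.mul_le_mul h1 h2
    omega
  rcases Nat.lt_or_ge (i : ℕ) (j : ℕ) with hlt | hge
  · exact hbound i j hlt hij
  · have hlt : (j : ℕ) < (i : ℕ) := by
      rcases Nat.eq_or_lt_of_le hge with he | h
      · exfalso
        exact hne (Fin.ext he.symm)
      · exact h
    exact hbound j i hlt hij.symm

theorem aper_uniform {S : Type} [Semigroup S] [Fintype S] (hap : Aperiodic S) :
    ∃ N, ∀ s : S, ∀ t : ℕ, spow s (N + t) = spow s (N + t) * s := by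
  refine ⟨(Fintype.card S + 1) * (Fintype.card S + 1), ?_⟩
  intro s
  obtain ⟨e, he, hidem⟩ := exists_idem_pow s
  have h0 : spow s e = spow s e * s := hap s e hidem
  have hprop : ∀ t, spow s (e + t) = spow s (e + t) * s := by
    intro t
    induction t with
    | zero => simpa using h0
    | succ t ih =>
      rw [show e + (t + 1) = (e + t) + 1 from by omega]
      show spow s (e + t) * s = spow s (e + t) * s * s
      conv_lhs => rw [ih]
  intro t
  have := hprop ((Fintype.card S + 1) * (Fintype.card S + 1) + t - e)
  rwa [show e + ((Fintype.card S + 1) * (Fintype.card S + 1) + t - e)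
      = (Fintype.card S + 1) * (Fintype.card S + 1) + t from by omega] at this

theorem aperN_withOne {S : Type} [Semigroup S] [Fintype S] (hap : Aperiodic S) :
    AperN (WithOne S) := by
  obtain ⟨N, hN⟩ := aper_uniform hap
  have hcoe : ∀ (s : S) (k : ℕ), ((s : WithOne S)) ^ (k + 1) = ((spow s k : S) : WithOne S) := by
    intro s k
    induction k with
    | zero => rw [pow_one]; rfl
    | succ k ih =>
      rw [pow_succ, ih, ← WithOne.coe_mul]
      rfl
  refine ⟨N + 1, ?_⟩
  intro x
  rcases eq_or_ne x 1 with rfl | hne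
  · simp
  · obtain ⟨s, rfl⟩ := WithOne.ne_one_iff_exists.mp hne
    rw [show N + 1 + 1 = (N + 1) + 1 from rfl, hcoe s (N + 1),
      show N + 1 + 2 = (N + 2) + 1 from by omega, hcoe s (N + 2)]
    have h1 : spow s (N + 1) = spow s (N + 2) := by
      have := hN s 1
      rw [show N + 2 = (N + 1) + 1 from by omega]
      exact this
    rw [h1]

end SemigroupConv
/-! ### Part 6: final assembly -/

section Final
variable {A : Type}

theorem hprod_wl_aux {S : Type} [Semigroup S] (α : FreeSemigroup A →ₙ* S) :
    ∀ (l : List A) (a : A),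
      hprod (fun a => ((α (FreeSemigroup.of a) : S) : WithOne S)) (a :: l)
        = ((α ⟨a, l⟩ : S) : WithOne S) := by
  intro l
  induction l with
  | nil =>
    intro a
    rw [show ([a] : List A) = [a] from rfl, hprod_single]
    rfl
  | cons b l ih =>
    intro a
    rw [hprod_cons, ih b, ← WithOne.coe_mul, ← map_mul]
    rfl

theorem hprod_wordList {S : Type} [Semigroup S] (α : FreeSemigroup A →ₙ* S) :
    ∀ w : FreeSemigroup A,
      hprod (fun a => ((α (FreeSemigroup.of a) : S) : WithOne S)) (wordList w)
        = ((α w : S) : WithOne S) := by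
  rintro ⟨a, l⟩
  exact hprod_wl_aux α l a

theorem backward_dir [Fintype A] (L : Set (FreeSemigroup A))
    {S : Type} [iS : Semigroup S] [fS : Fintype S] (α : FreeSemigroup A →ₙ* S)
    (F : Set S) (hL : L = ⇑α ⁻¹' F) (hap : Aperiodic S) : FODefinable L := by
  classical
  haveI : Fintype (WithOne S) := show Fintype (Option S) from inferInstance
  have hapM : AperN (WithOne S) := aperN_withOne hap
  have hbase : ∀ x : WithOne S,
      SF {l : List A | hprod (fun a => ((α (FreeSemigroup.of a) : S) : WithOne S)) l = x} :=
    fun x => aperiodic_to_SF (Fintype.card (WithOne S)) hapM le_rfl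
      (Fintype.card A) le_rfl _ x
  have hK : SF {l : List A | ∃ s ∈ F,
      hprod (fun a => ((α (FreeSemigroup.of a) : S) : WithOne S)) l = ((s : S) : WithOne S)} := by
    have he : {l : List A | ∃ s ∈ F,
        hprod (fun a => ((α (FreeSemigroup.of a) : S) : WithOne S)) l = ((s : S) : WithOne S)}
        = ⋃ (x : WithOne S), ⋃ (_ : ∃ s ∈ F, ((s : S) : WithOne S) = x),
          {l : List A | hprod (fun a => ((α (FreeSemigroup.of a) : S) : WithOne S)) l = x} := by
      ext l
      simp only [Set.mem_setOf_eq, Set.mem_iUnion]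
      constructor
      · rintro ⟨s, hs, hval⟩
        exact ⟨(s : WithOne S), ⟨s, hs, rfl⟩, hval⟩
      · rintro ⟨x, ⟨s, hs, rfl⟩, hval⟩
        exact ⟨s, hs, hval⟩
    rw [he]
    exact SF_iUnion_cond _ _ (fun x _ => hbase x)
  have heL : L = {w : FreeSemigroup A | wordList w ∈ {l : List A | ∃ s ∈ F,
      hprod (fun a => ((α (FreeSemigroup.of a) : S) : WithOne S)) l = ((s : S) : WithOne S)}} := by
    rw [hL]
    ext w
    simp only [Set.mem_preimage, Set.mem_setOf_eq]
    rw [hprod_wordList α w]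
    constructor
    · intro h
      exact ⟨α w, h, rfl⟩
    · rintro ⟨s, hs, he⟩
      rw [WithOne.coe_inj] at he
      rw [he]
      exact hs
  rw [heL]
  exact SF_to_FO hK

end Final
theorem stmt7 {A : Type} [Fintype A] (L : Set (FreeSemigroup A))
    (hL : Regular L) :
    FODefinable L ↔
      ∃ (S : Type) (_ : Semigroup S) (_ : Fintype S)
        (α : FreeSemigroup A →ₙ* S) (F : Set S),
        L = ⇑α ⁻¹' F ∧ Aperiodic S := by
  constructor
  · intro hfo
    exact forward_dir L hL hfo
  · rintro ⟨S, iS, fS, α, F, hLF, hap⟩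
    exact @backward_dir A _ L S iS fS α F hLF hap

end FOSep
end
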